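/- arXiv:1309.4183 — 6 statements merged into one kernel-verified Lean document; each statement's English description precedes it below -/
import Mathlib

section
/- Let X_n ~ F^{n,l}_{b,w} be the number of white balls after n draws in the time-inhomogeneous Pólya urn started with b black and w white balls (each draw: replace the drawn ball together with one more of the same color; after every l-th draw add an extra black ball). Let N_i = w + b + i + ⌊i/l⌋ be the total number of balls after i draws. Then for every integer m ≥ 1, E[∏_{i=0}^{m-1}(X_n + i)] = (∏_{j=0}^{m-1}(w+j)) · ∏_{i=1}^{n}(1 + m/N_{i-1}). -/
open Finset

/-- Total number of balls after `i` draws in the `F^{n,l}_{b,w}` urn. -/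
def urnTotal (b w l i : ℕ) : ℕ := w + b + i + i / l

/-- Probability mass function of the number of white balls after `n` draws in the
time-inhomogeneous Pólya urn started with `b` black and `w` white balls: each drawn
ball is replaced together with an additional ball of the same color, and after every
`l`-th draw an extra black ball is added. -/
noncomputable def urnPMF (b w l : ℕ) : ℕ → ℕ → ℝ
  | 0 => fun k => if k = w then 1 else 0
  | n + 1 => fun k =>
      urnPMF b w l n k * (1 - (k : ℝ) / (urnTotal b w l n : ℝ)) +
      urnPMF b w l n (k - 1) * (((k : ℝ) - 1) / (urnTotal b w l n : ℝ))

lemma urnPMF_eq_zero (b w l : ℕ) : ∀ n k, w + n < k → urnPMF b w l n k = 0 := by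
  intro n
  induction n with
  | zero =>
    intro k hk
    simp only [urnPMF]
    rw [if_neg (by omega)]
  | succ n ih =>
    intro k hk
    simp only [urnPMF]
    rw [ih k (by omega), ih (k - 1) (by omega)]
    ring

/-- Rising factorial moments of the urn:
`E[∏_{i=0}^{m-1}(X_n + i)] = ∏_{j<m}(w+j) · ∏_{i=1}^{n}(1 + m/N_{i-1})`. -/
theorem urn_rising_factorial_moments (b w l n m : ℕ) (hl : 1 ≤ l) (hm : 1 ≤ m) :
    (∑' k : ℕ, (∏ i ∈ range m, ((k : ℝ) + i)) * urnPMF b w l n k)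
      = (∏ j ∈ range m, ((w : ℝ) + j)) *
        ∏ i ∈ range n, (1 + (m : ℝ) / (urnTotal b w l i : ℝ)) := by
  induction n with
  | zero =>
    rw [tsum_eq_single w (by
      intro k hk
      simp only [urnPMF]
      rw [if_neg hk, mul_zero])]
    simp [urnPMF]
  | succ n ih =>
    set R : ℕ → ℝ := fun k => ∏ i ∈ range m, ((k : ℝ) + i) with hR
    set N : ℝ := (urnTotal b w l n : ℝ) with hN
    set p : ℕ → ℝ := urnPMF b w l n with hp
    have hR0 : R 0 = 0 := by
      rw [hR]
      apply Finset.prod_eq_zero (Finset.mem_range.mpr hm)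
      norm_num
    have hRkey : ∀ k : ℕ, (k : ℝ) * R (k + 1) = ((k : ℝ) + m) * R k := by
      intro k
      have h1 : (k : ℝ) * R (k + 1) = ∏ i ∈ range (m + 1), ((k : ℝ) + i) := by
        rw [Finset.prod_range_succ' (fun i => ((k : ℝ) + i)) m]
        simp only [hR, Nat.cast_zero, add_zero]
        rw [mul_comm]
        congr 1
        apply Finset.prod_congr rfl
        intro i _
        push_cast
        ring
      have h2 : ((k : ℝ) + m) * R k = ∏ i ∈ range (m + 1), ((k : ℝ) + i) := by
        rw [Finset.prod_range_succ, hR, mul_comm]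
      rw [h1, h2]
    -- summability via finite support
    have hpz : ∀ k, w + n < k → p k = 0 := urnPMF_eq_zero b w l n
    have hs1 : Summable (fun k => R k * (p k * (1 - (k : ℝ) / N))) := by
      apply summable_of_ne_finset_zero (s := range (w + n + 1))
      intro k hk
      rw [hpz k (by simpa using hk)]
      ring
    have hs2 : Summable (fun k => R k * (p (k - 1) * (((k : ℝ) - 1) / N))) := by
      apply summable_of_ne_finset_zero (s := range (w + n + 2))
      intro k hk
      rw [hpz (k - 1) (by simp only [Finset.mem_range, not_lt] at hk; omega)]
      ring
    have step1 : (∑' k : ℕ, R k * urnPMF b w l (n + 1) k)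
        = (∑' k : ℕ, R k * (p k * (1 - (k : ℝ) / N)))
          + ∑' k : ℕ, R k * (p (k - 1) * (((k : ℝ) - 1) / N)) := by
      rw [← Summable.tsum_add hs1 hs2]
      apply tsum_congr
      intro k
      simp only [urnPMF, ← hp, ← hN]
      ring
    have step2 : (∑' k : ℕ, R k * (p (k - 1) * (((k : ℝ) - 1) / N)))
        = ∑' k : ℕ, R (k + 1) * (p k * ((k : ℝ) / N)) := by
      rw [Summable.tsum_eq_zero_add hs2]
      simp only [hR0, zero_mul, zero_add]
      apply tsum_congr
      intro k
      have : (k + 1 : ℕ) - 1 = k := by omega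
      rw [this]
      push_cast
      ring
    rw [step1, step2, ← Summable.tsum_add hs1 (by
      apply summable_of_ne_finset_zero (s := range (w + n + 1))
      intro k hk
      rw [hpz k (by simpa using hk)]
      ring)]
    have step3 : (∑' k : ℕ, (R k * (p k * (1 - (k : ℝ) / N))
        + R (k + 1) * (p k * ((k : ℝ) / N))))
        = (1 + (m : ℝ) / N) * ∑' k : ℕ, R k * p k := by
      rw [← tsum_mul_left]
      apply tsum_congr
      intro k
      have h := hRkey k
      have : R k * (1 - (k : ℝ) / N) + R (k + 1) * ((k : ℝ) / N)
          = (1 + (m : ℝ) / N) * R k := by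
        simp only [div_eq_mul_inv]
        linear_combination N⁻¹ * h
      calc R k * (p k * (1 - (k : ℝ) / N)) + R (k + 1) * (p k * ((k : ℝ) / N))
          = (R k * (1 - (k : ℝ) / N) + R (k + 1) * ((k : ℝ) / N)) * p k := by ring
        _ = (1 + (m : ℝ) / N) * (R k * p k) := by rw [this]; ring
    rw [step3, ih, Finset.prod_range_succ]
    ring
end

section
/- With X_n ~ F^{n,l}_{b,w} as above and m ≥ 1 an integer, there exist constants c, C > 0 depending only on b, w, l, m (not on n) such that c·n^{ml/(l+1)} < E[X_n^m] < C·n^{ml/(l+1)} for all n ≥ 1. -/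
open Finset

noncomputable def rf (m k : ℕ) : ℝ := ∏ j ∈ Finset.range m, ((k : ℝ) + j)

lemma rf_key (m k : ℕ) : (k : ℝ) * rf m (k + 1) = ((k : ℝ) + m) * rf m k := by
  have h1 := Finset.prod_range_succ' (fun j => (k:ℝ) + j) m
  push_cast at h1
  have h2 : ∏ j ∈ Finset.range (m+1), ((k:ℝ) + j) = (∏ j ∈ Finset.range m, ((k:ℝ) + j)) * ((k:ℝ) + m) :=
    Finset.prod_range_succ (fun j => (k:ℝ) + j) m
  have h3 : rf m (k+1) = ∏ j ∈ Finset.range m, ((k:ℝ) + (j+1)) := by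
    unfold rf
    apply Finset.prod_congr rfl
    intro j _
    push_cast
    ring
  rw [h3]
  unfold rf
  nlinarith [h1, h2]

lemma rf_pos (m k : ℕ) (hk : 1 ≤ k) : 0 < rf m k := by
  unfold rf
  apply Finset.prod_pos
  intro j _
  have : (1:ℝ) ≤ (k:ℝ) := by exact_mod_cast hk
  positivity

lemma rf_zero (m : ℕ) (hm : 1 ≤ m) : rf m 0 = 0 := by
  unfold rf
  apply Finset.prod_eq_zero (Finset.mem_range.mpr hm)
  simp

lemma pow_le_rf (m k : ℕ) : (k : ℝ) ^ m ≤ rf m k := by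
  unfold rf
  have hc : (k:ℝ)^m = ∏ _j ∈ Finset.range m, (k:ℝ) := by
    rw [Finset.prod_const, Finset.card_range]
  rw [hc]
  apply Finset.prod_le_prod
  · intro j _; positivity
  · intro j _; simp [Nat.cast_nonneg]

lemma rf_le_pow (m k : ℕ) (hm : 1 ≤ m) : rf m k ≤ (m:ℝ)^m * (k:ℝ)^m := by
  rcases Nat.eq_zero_or_pos k with hk | hk
  · subst hk; rw [rf_zero m hm]; positivity
  · unfold rf
    have : (m:ℝ)^m * (k:ℝ)^m = ∏ _j ∈ Finset.range m, ((m:ℝ) * k) := by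
      rw [Finset.prod_const, Finset.card_range, mul_pow]
    rw [this]
    apply Finset.prod_le_prod
    · intro j _; positivity
    · intro j hj
      have hj' : (j:ℝ) ≤ (m:ℝ) - 1 := by
        have := Finset.mem_range.mp hj
        have : (j:ℝ) + 1 ≤ m := by exact_mod_cast this
        linarith
      have hk' : (1:ℝ) ≤ (k:ℝ) := by exact_mod_cast hk
      nlinarith

lemma urnPMF_support (b w l : ℕ) (hw : 1 ≤ w) :
    ∀ n k, (k < w ∨ w + n < k) → urnPMF b w l n k = 0 := by
  intro n
  induction n with
  | zero =>
    intro k hk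
    simp only [urnPMF]
    rcases hk with h | h <;> (rw [if_neg]; omega)
  | succ n ih =>
    intro k hk
    simp only [urnPMF]
    rcases hk with h | h
    · rw [ih k (Or.inl h), ih (k-1) (Or.inl (by omega))]; ring
    · rw [ih k (Or.inr (by omega)), ih (k-1) (Or.inr (by omega))]; ring

lemma urnPMF_nonneg (b w l : ℕ) (hw : 1 ≤ w) :
    ∀ n k, 0 ≤ urnPMF b w l n k := by
  intro n
  induction n with
  | zero => intro k; simp only [urnPMF]; split <;> norm_num
  | succ n ih =>
    intro k
    simp only [urnPMF]
    apply add_nonneg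
    · rcases le_or_gt k (w + n) with h | h
      · apply mul_nonneg (ih k)
        have hT : (k:ℝ) ≤ (urnTotal b w l n : ℝ) := by
          have hd : 0 ≤ n/l := Nat.zero_le _
          have : k ≤ urnTotal b w l n := by unfold urnTotal; omega
          exact_mod_cast this
        have hT0 : (0:ℝ) < (urnTotal b w l n : ℝ) := by
          have hd : 0 ≤ n/l := Nat.zero_le _
          have : 0 < urnTotal b w l n := by unfold urnTotal; omega
          exact_mod_cast this
        have := div_le_one_of_le₀ hT hT0.le
        linarith
      · rw [urnPMF_support b w l hw n k (Or.inr h)]; ring_nf; positivity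
    · rcases Nat.lt_or_ge k 1 with h | h
      · interval_cases k
        rw [urnPMF_support b w l hw n 0 (Or.inl hw)]; norm_num
      · rcases Nat.lt_or_ge (k-1) w with h2 | h2
        · rw [urnPMF_support b w l hw n (k-1) (Or.inl h2)]; simp
        · apply mul_nonneg (ih (k-1))
          apply div_nonneg
          · have : (1:ℝ) ≤ (k:ℝ) := by exact_mod_cast h
            linarith
          · positivity

noncomputable def urnE (b w l m n : ℕ) : ℝ :=
  ∑ k ∈ Finset.range (w + n + 1), rf m k * urnPMF b w l n k

lemma tsum_moment_eq (b w l m n : ℕ) (hw : 1 ≤ w) :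
    (∑' k : ℕ, ((k:ℝ)^m) * urnPMF b w l n k)
      = ∑ k ∈ Finset.range (w+n+1), ((k:ℝ)^m) * urnPMF b w l n k := by
  apply tsum_eq_sum
  intro k hk
  have hk' : w + n < k := by
    have := Finset.mem_range.not.mp hk
    omega
  rw [urnPMF_support b w l hw n k (Or.inr hk'), mul_zero]

lemma urnE_succ (b w l m n : ℕ) (hw : 1 ≤ w) (hm : 1 ≤ m) :
    urnE b w l m (n+1) = (1 + (m:ℝ) / (urnTotal b w l n : ℝ)) * urnE b w l m n := by
  set T : ℝ := (urnTotal b w l n : ℝ) with hT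
  have hsplit : urnE b w l m (n+1) =
      (∑ k ∈ Finset.range (w+n+2), rf m k * (urnPMF b w l n k * (1 - (k:ℝ)/T)))
    + (∑ k ∈ Finset.range (w+n+2), rf m k * (urnPMF b w l n (k-1) * (((k:ℝ)-1)/T))) := by
    unfold urnE
    rw [← Finset.sum_add_distrib]
    apply Finset.sum_congr rfl
    intro k _
    simp only [urnPMF]
    ring
  have hA : (∑ k ∈ Finset.range (w+n+2), rf m k * (urnPMF b w l n k * (1 - (k:ℝ)/T)))
      = ∑ k ∈ Finset.range (w+n+1), rf m k * (urnPMF b w l n k * (1 - (k:ℝ)/T)) := by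
    rw [Finset.sum_range_succ, urnPMF_support b w l hw n (w+n+1) (Or.inr (by omega))]
    ring
  have hB : (∑ k ∈ Finset.range (w+n+2), rf m k * (urnPMF b w l n (k-1) * (((k:ℝ)-1)/T)))
      = ∑ k ∈ Finset.range (w+n+1), rf m (k+1) * (urnPMF b w l n k * ((k:ℝ)/T)) := by
    rw [Finset.sum_range_succ']
    have h0 : rf m 0 * (urnPMF b w l n (0-1) * (((0:ℕ):ℝ)-1)/T) = 0 := by
      rw [rf_zero m hm]; ring
    rw [show (0:ℕ) - 1 = 0 from rfl]
    rw [rf_zero m hm]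
    simp only [Nat.add_sub_cancel]
    have : ∀ k, (((k+1:ℕ):ℝ) - 1) = (k:ℝ) := by intro k; push_cast; ring
    rw [Finset.sum_congr rfl (fun k _ => by rw [this k])]
    ring
  rw [hsplit, hA, hB, ← Finset.sum_add_distrib]
  unfold urnE
  rw [Finset.mul_sum]
  apply Finset.sum_congr rfl
  intro k _
  linear_combination (urnPMF b w l n k / T) * rf_key m k

lemma urnE_eq (b w l m : ℕ) (hw : 1 ≤ w) (hm : 1 ≤ m) (n : ℕ) :
    urnE b w l m n = rf m w * ∏ i ∈ Finset.range n, (1 + (m:ℝ)/(urnTotal b w l i : ℝ)) := by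
  induction n with
  | zero =>
    unfold urnE
    simp only [urnPMF, mul_ite, mul_one, mul_zero]
    rw [Finset.sum_ite_eq' (Finset.range (w+0+1)) w (rf m)]
    simp
  | succ n ih =>
    rw [urnE_succ b w l m n hw hm, ih, Finset.prod_range_succ]
    ring

lemma log1p_ge (x : ℝ) (hx : 0 ≤ x) : x/(1+x) ≤ Real.log (1+x) := by
  have h := Real.log_le_sub_one_of_pos (x := 1/(1+x)) (by positivity)
  rw [Real.log_div one_ne_zero (by positivity), Real.log_one] at h
  have h2 : (1:ℝ)/(1+x) - 1 = -(x/(1+x)) := by field_simp; ring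
  linarith [h2 ▸ h]

lemma T_lb (b w l i : ℕ) (hw : 1 ≤ w) (hl : 1 ≤ l) :
    (i:ℝ) * (l+1)/l ≤ (urnTotal b w l i : ℝ) := by
  have hmod := Nat.div_add_mod i l
  have hmlt : i % l < l := Nat.mod_lt i hl
  have hl0 : (0:ℝ) < (l:ℝ) := by exact_mod_cast hl
  have hcast : (l:ℝ) * ((i/l : ℕ):ℝ) + ((i % l : ℕ):ℝ) = (i:ℝ) := by exact_mod_cast hmod
  have hmlt' : ((i % l : ℕ):ℝ) ≤ (l:ℝ) - 1 := by
    have h : (i % l : ℕ) + 1 ≤ l := hmlt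
    have h' : ((i % l : ℕ):ℝ) + 1 ≤ (l:ℝ) := by exact_mod_cast h
    linarith
  have hT : (urnTotal b w l i : ℝ) = (w:ℝ) + b + i + ((i/l : ℕ):ℝ) := by
    unfold urnTotal; push_cast; ring
  have hw' : (1:ℝ) ≤ (w:ℝ) := by exact_mod_cast hw
  have hb : (0:ℝ) ≤ (b:ℝ) := by positivity
  rw [hT]
  rw [div_le_iff₀ hl0]
  nlinarith

lemma T_ub (b w l i : ℕ) (hl : 1 ≤ l) :
    (urnTotal b w l i : ℝ) ≤ (w:ℝ) + b + (i:ℝ)*(l+1)/l := by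
  have hl0 : (0:ℝ) < (l:ℝ) := by exact_mod_cast hl
  have hdiv : ((i/l : ℕ):ℝ) ≤ (i:ℝ)/(l:ℝ) := by
    rw [le_div_iff₀ hl0]
    exact_mod_cast Nat.div_mul_le_self i l
  have hT : (urnTotal b w l i : ℝ) = (w:ℝ) + b + i + ((i/l : ℕ):ℝ) := by
    unfold urnTotal; push_cast; ring
  rw [hT]
  have : (i:ℝ)*(l+1)/l = (i:ℝ) + (i:ℝ)/l := by field_simp
  rw [this]
  linarith

lemma sum_inv_ge_log (K : ℝ) (hK : 1 ≤ K) (n : ℕ) :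
    Real.log ((n:ℝ) + K) - Real.log K ≤ ∑ i ∈ Finset.range n, 1/((i:ℝ)+K) := by
  induction n with
  | zero => simp
  | succ n ih =>
    rw [Finset.sum_range_succ]
    have h1 : (0:ℝ) < (n:ℝ) + K := by positivity
    have h2 : (0:ℝ) < (n:ℝ) + 1 + K := by positivity
    have hstep : Real.log ((n:ℝ)+1+K) - Real.log ((n:ℝ)+K) ≤ 1/((n:ℝ)+K) := by
      have h := Real.log_le_sub_one_of_pos (x := ((n:ℝ)+1+K)/((n:ℝ)+K)) (by positivity)
      rw [Real.log_div h2.ne' h1.ne'] at h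
      have : ((n:ℝ)+1+K)/((n:ℝ)+K) - 1 = 1/((n:ℝ)+K) := by field_simp; ring
      linarith [this ▸ h]
    push_cast
    linarith

lemma harm_ub : ∀ N : ℕ, 1 ≤ N → ∑ i ∈ Finset.range N, 1/((i:ℝ)+1) ≤ 1 + Real.log N := by
  intro N hN
  induction N, hN using Nat.le_induction with
  | base => norm_num
  | succ N hN ih =>
    rw [Finset.sum_range_succ]
    have hN0 : (0:ℝ) < (N:ℝ) := by exact_mod_cast hN
    have hN1 : (0:ℝ) < (N:ℝ) + 1 := by positivity
    have hstep : 1/((N:ℝ)+1) ≤ Real.log ((N:ℝ)+1) - Real.log N := by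
      have h := Real.log_le_sub_one_of_pos (x := (N:ℝ)/((N:ℝ)+1)) (by positivity)
      rw [Real.log_div hN0.ne' hN1.ne'] at h
      have : (N:ℝ)/((N:ℝ)+1) - 1 = -(1/((N:ℝ)+1)) := by field_simp; ring
      linarith [this ▸ h]
    push_cast
    linarith

lemma harm_ub' (N : ℕ) : ∑ i ∈ Finset.range N, 1/((i:ℝ)+1) ≤ 1 + Real.log ((N:ℝ)+1) := by
  rcases Nat.eq_zero_or_pos N with h | h
  · subst h; simp
  · have h1 := harm_ub N h
    have h2 : Real.log (N:ℝ) ≤ Real.log ((N:ℝ)+1) := by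
      apply Real.log_le_log (by exact_mod_cast h)
      linarith
    linarith

section ProdBounds
variable (b w l m : ℕ)

noncomputable def urnP (n : ℕ) : ℝ := ∏ i ∈ Finset.range n, (1 + (m:ℝ)/(urnTotal b w l i : ℝ))

lemma T_pos (i : ℕ) (hw : 1 ≤ w) : (0:ℝ) < (urnTotal b w l i : ℝ) := by
  have : 0 < urnTotal b w l i := by
    have := Nat.zero_le (i / l); unfold urnTotal; omega
  exact_mod_cast this

lemma factor_ge_one (i : ℕ) (hw : 1 ≤ w) : (1:ℝ) ≤ 1 + (m:ℝ)/(urnTotal b w l i : ℝ) := by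
  have h := T_pos b w l i hw
  have : (0:ℝ) ≤ (m:ℝ)/(urnTotal b w l i : ℝ) := by positivity
  linarith

lemma urnP_pos (n : ℕ) (hw : 1 ≤ w) : 0 < urnP b w l m n := by
  apply Finset.prod_pos
  intro i _
  linarith [factor_ge_one b w l m i hw]

lemma log_urnP (n : ℕ) (hw : 1 ≤ w) :
    Real.log (urnP b w l m n) = ∑ i ∈ Finset.range n, Real.log (1 + (m:ℝ)/(urnTotal b w l i : ℝ)) := by
  unfold urnP
  rw [Real.log_prod]
  intro i _
  have := factor_ge_one b w l m i hw
  linarith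

lemma log_urnP_ub (n : ℕ) (hn : 1 ≤ n) (hw : 1 ≤ w) (hl : 1 ≤ l) :
    Real.log (urnP b w l m n) ≤ 2*(m:ℝ) + ((m:ℝ)*l/((l:ℝ)+1)) * Real.log n := by
  rw [log_urnP b w l m n hw]
  obtain ⟨N, rfl⟩ : ∃ N, n = N + 1 := ⟨n-1, by omega⟩
  have hl0 : (0:ℝ) < (l:ℝ) := by exact_mod_cast hl
  have hterm : ∀ i : ℕ, Real.log (1 + (m:ℝ)/(urnTotal b w l i : ℝ)) ≤ (m:ℝ)/(urnTotal b w l i : ℝ) := by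
    intro i
    have h := Real.log_le_sub_one_of_pos (x := 1 + (m:ℝ)/(urnTotal b w l i : ℝ))
      (by linarith [factor_ge_one b w l m i hw])
    linarith
  calc ∑ i ∈ Finset.range (N+1), Real.log (1 + (m:ℝ)/(urnTotal b w l i : ℝ))
      ≤ ∑ i ∈ Finset.range (N+1), (m:ℝ)/(urnTotal b w l i : ℝ) :=
        Finset.sum_le_sum (fun i _ => hterm i)
    _ = (∑ i ∈ Finset.range N, (m:ℝ)/(urnTotal b w l (i+1) : ℝ)) + (m:ℝ)/(urnTotal b w l 0 : ℝ) :=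
        Finset.sum_range_succ' _ N
    _ ≤ (∑ i ∈ Finset.range N, ((m:ℝ)*l/((l:ℝ)+1)) * (1/((i:ℝ)+1))) + (m:ℝ) := by
        apply add_le_add
        · apply Finset.sum_le_sum
          intro i _
          have hTl := T_lb b w l (i+1) hw hl
          have hTp := T_pos b w l (i+1) hw
          have hx : (0:ℝ) < ((i:ℕ):ℝ) + 1 := by positivity
          have hlb : ((i:ℝ)+1) * (l+1)/l ≤ (urnTotal b w l (i+1) : ℝ) := by
            have : (((i+1:ℕ)):ℝ) = (i:ℝ)+1 := by push_cast; ring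
            rw [← this]; exact hTl
          have hlb0 : (0:ℝ) < ((i:ℝ)+1) * (l+1)/l := by positivity
          have hdiv : (m:ℝ)/(urnTotal b w l (i+1) : ℝ) ≤ (m:ℝ)/(((i:ℝ)+1) * (l+1)/l) := by
            apply div_le_div_of_nonneg_left (by positivity) hlb0 hlb
          calc (m:ℝ)/(urnTotal b w l (i+1) : ℝ) ≤ (m:ℝ)/(((i:ℝ)+1) * (l+1)/l) := hdiv
            _ = ((m:ℝ)*l/((l:ℝ)+1)) * (1/((i:ℝ)+1)) := by
                rw [mul_one_div, div_div_eq_mul_div, div_div, mul_comm ((l:ℝ)+1) ((i:ℝ)+1)]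
        · have h1 : (1:ℝ) ≤ (urnTotal b w l 0 : ℝ) := by
            have : 1 ≤ urnTotal b w l 0 := by
              have := Nat.zero_le (0 / l); unfold urnTotal; omega
            exact_mod_cast this
          calc (m:ℝ)/(urnTotal b w l 0 : ℝ) ≤ (m:ℝ)/1 :=
              div_le_div_of_nonneg_left (by positivity) one_pos h1
            _ = (m:ℝ) := by norm_num
    _ ≤ ((m:ℝ)*l/((l:ℝ)+1)) * (1 + Real.log ((N:ℝ)+1)) + (m:ℝ) := by
        rw [← Finset.mul_sum]
        refine add_le_add ?_ le_rfl
        apply mul_le_mul_of_nonneg_left (harm_ub' N) (by positivity)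
    _ ≤ 2*(m:ℝ) + ((m:ℝ)*l/((l:ℝ)+1)) * Real.log ((N:ℕ)+1 : ℕ) := by
        have halpha : (m:ℝ)*l/((l:ℝ)+1) ≤ (m:ℝ) := by
          rw [div_le_iff₀ (by positivity)]
          nlinarith [Nat.cast_nonneg (α := ℝ) m]
        have hcast : (((N:ℕ)+1 : ℕ):ℝ) = (N:ℝ)+1 := by push_cast; ring
        rw [hcast]
        nlinarith [Real.log_nonneg (by linarith [Nat.cast_nonneg (α := ℝ) N] : (1:ℝ) ≤ (N:ℝ)+1)]

lemma log_urnP_lb (n : ℕ) (hw : 1 ≤ w) (hl : 1 ≤ l) (hn : 1 ≤ n) :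
    ((m:ℝ)*l/((l:ℝ)+1)) * Real.log n - ((m:ℝ)*l/((l:ℝ)+1)) * Real.log ((w:ℝ)+b+m)
      ≤ Real.log (urnP b w l m n) := by
  rw [log_urnP b w l m n hw]
  set K : ℝ := (w:ℝ)+b+m with hK
  have hK1 : (1:ℝ) ≤ K := by
    have : (1:ℝ) ≤ (w:ℝ) := by exact_mod_cast hw
    have hb : (0:ℝ) ≤ (b:ℝ) := by positivity
    have hm : (0:ℝ) ≤ (m:ℝ) := by positivity
    rw [hK]; linarith
  have hl0 : (0:ℝ) < (l:ℝ) := by exact_mod_cast hl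
  have hterm : ∀ i : ℕ, ((m:ℝ)*l/((l:ℝ)+1)) * (1/((i:ℝ)+K))
      ≤ Real.log (1 + (m:ℝ)/(urnTotal b w l i : ℝ)) := by
    intro i
    have hTp := T_pos b w l i hw
    have hTu := T_ub b w l i hl
    have hx : (0:ℝ) ≤ (m:ℝ)/(urnTotal b w l i : ℝ) := by positivity
    have h1 := log1p_ge _ hx
    have heq : (m:ℝ)/(urnTotal b w l i : ℝ) / (1 + (m:ℝ)/(urnTotal b w l i : ℝ))
        = (m:ℝ)/((urnTotal b w l i : ℝ) + m) := by
      field_simp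
    rw [heq] at h1
    have hTm : (urnTotal b w l i : ℝ) + m ≤ ((l:ℝ)+1)/l * ((i:ℝ) + K) := by
      have : ((l:ℝ)+1)/l * ((i:ℝ) + K) = (i:ℝ)*(l+1)/l + K*((l:ℝ)+1)/l := by ring
      rw [this]
      have hKmul : K ≤ K*((l:ℝ)+1)/l := by
        rw [le_div_iff₀ hl0]
        nlinarith
      rw [hK] at hKmul ⊢
      linarith
    have hTm0 : (0:ℝ) < (urnTotal b w l i : ℝ) + m := by positivity
    have h2 : (m:ℝ)/(((l:ℝ)+1)/l * ((i:ℝ) + K)) ≤ (m:ℝ)/((urnTotal b w l i : ℝ) + m) :=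
      div_le_div_of_nonneg_left (by positivity) hTm0 hTm
    have h3 : (m:ℝ)/(((l:ℝ)+1)/l * ((i:ℝ) + K)) = ((m:ℝ)*l/((l:ℝ)+1)) * (1/((i:ℝ)+K)) := by
      have hiK : (0:ℝ) < (i:ℝ) + K := by positivity
      rw [mul_one_div, div_eq_div_iff (by positivity) (by positivity)]
      field_simp
    linarith [h3 ▸ h2]
  calc ((m:ℝ)*l/((l:ℝ)+1)) * Real.log n - ((m:ℝ)*l/((l:ℝ)+1)) * Real.log K
      ≤ ((m:ℝ)*l/((l:ℝ)+1)) * (Real.log ((n:ℝ) + K) - Real.log K) := by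
        have hlog : Real.log (n:ℝ) ≤ Real.log ((n:ℝ) + K) := by
          apply Real.log_le_log (by exact_mod_cast hn)
          linarith
        nlinarith [mul_le_mul_of_nonneg_left hlog (show (0:ℝ) ≤ (m:ℝ)*l/((l:ℝ)+1) by positivity)]
    _ ≤ ((m:ℝ)*l/((l:ℝ)+1)) * ∑ i ∈ Finset.range n, 1/((i:ℝ)+K) :=
        mul_le_mul_of_nonneg_left (sum_inv_ge_log K hK1 n) (by positivity)
    _ = ∑ i ∈ Finset.range n, ((m:ℝ)*l/((l:ℝ)+1)) * (1/((i:ℝ)+K)) := Finset.mul_sum _ _ _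
    _ ≤ _ := Finset.sum_le_sum (fun i _ => hterm i)

end ProdBounds


/-- `E[X_n^m] ≍ n^{ml/(l+1)}`: there are constants `c, C > 0` depending only on
`b, w, l, m` such that `c n^{ml/(l+1)} < E[X_n^m] < C n^{ml/(l+1)}` for all `n ≥ 1`. -/
theorem urn_moment_growth (b w l m : ℕ) (hl : 1 ≤ l) (hm : 1 ≤ m) (hw : 1 ≤ w) :
    ∃ c C : ℝ, 0 < c ∧ 0 < C ∧ ∀ n : ℕ, 1 ≤ n →
      c * (n : ℝ) ^ (((m * l : ℕ) : ℝ) / ((l : ℝ) + 1))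
          < (∑' k : ℕ, ((k : ℝ) ^ m) * urnPMF b w l n k) ∧
      (∑' k : ℕ, ((k : ℝ) ^ m) * urnPMF b w l n k)
          < C * (n : ℝ) ^ (((m * l : ℕ) : ℝ) / ((l : ℝ) + 1)) := by
  set α : ℝ := (m:ℝ)*l/((l:ℝ)+1) with hα
  set K : ℝ := (w:ℝ)+b+m with hKdef
  have hrfw : 0 < rf m w := rf_pos m w hw
  have hmpow : (0:ℝ) < (m:ℝ)^m := by
    have : (0:ℝ) < (m:ℝ) := by exact_mod_cast hm
    positivity
  set A : ℝ := Real.exp (α * Real.log K) with hA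
  have hApos : 0 < A := Real.exp_pos _
  refine ⟨rf m w / (m:ℝ)^m / A / 2, rf m w * Real.exp (2*(m:ℝ)) * 2,
    by positivity, by positivity, ?_⟩
  intro n hn
  have hnR : (1:ℝ) ≤ (n:ℝ) := by exact_mod_cast hn
  have hn0 : (0:ℝ) < (n:ℝ) := by linarith
  set B : ℝ := Real.exp (α * Real.log n) with hB
  have hBpos : 0 < B := Real.exp_pos _
  have hexp : ((n:ℝ) ^ (((m*l:ℕ):ℝ)/((l:ℝ)+1))) = B := by
    rw [hB, Real.rpow_def_of_pos hn0]
    congr 1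
    push_cast
    ring
  have hPpos := urnP_pos b w l m n hw
  have hE := urnE_eq b w l m hw hm n
  have hEdef : urnE b w l m n = rf m w * urnP b w l m n := hE
  have hup : (∑ k ∈ Finset.range (w+n+1), ((k:ℝ)^m) * urnPMF b w l n k)
      ≤ urnE b w l m n := by
    unfold urnE
    apply Finset.sum_le_sum
    intro k _
    exact mul_le_mul_of_nonneg_right (pow_le_rf m k) (urnPMF_nonneg b w l hw n k)
  have hlo : urnE b w l m n / (m:ℝ)^m
      ≤ (∑ k ∈ Finset.range (w+n+1), ((k:ℝ)^m) * urnPMF b w l n k) := by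
    unfold urnE
    rw [Finset.sum_div]
    apply Finset.sum_le_sum
    intro k _
    rw [div_le_iff₀ hmpow]
    nlinarith [rf_le_pow m k hm, urnPMF_nonneg b w l hw n k,
      pow_nonneg (Nat.cast_nonneg (α := ℝ) k) m]
  have hPub : urnP b w l m n ≤ Real.exp (2*(m:ℝ)) * B := by
    have h := log_urnP_ub b w l m n hn hw hl
    calc urnP b w l m n = Real.exp (Real.log (urnP b w l m n)) :=
          (Real.exp_log hPpos).symm
      _ ≤ Real.exp (2*(m:ℝ) + α * Real.log n) := Real.exp_le_exp.mpr h
      _ = Real.exp (2*(m:ℝ)) * B := by rw [Real.exp_add]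
  have hPlb : B / A ≤ urnP b w l m n := by
    have h := log_urnP_lb b w l m n hw hl hn
    calc B / A = Real.exp (α * Real.log n - α * Real.log K) := by
          rw [Real.exp_sub]
      _ ≤ Real.exp (Real.log (urnP b w l m n)) := Real.exp_le_exp.mpr h
      _ = urnP b w l m n := Real.exp_log hPpos
  rw [tsum_moment_eq b w l m n hw, hexp]
  constructor
  · have h1 : rf m w / (m:ℝ)^m * (B / A) ≤ urnE b w l m n / (m:ℝ)^m := by
      rw [hEdef, div_mul_eq_mul_div]
      gcongr
    have h2 : rf m w / (m:ℝ)^m / A / 2 * B < rf m w / (m:ℝ)^m * (B / A) := by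
      have hx : 0 < rf m w / (m:ℝ)^m * (B / A) := by positivity
      have heq : rf m w / (m:ℝ)^m / A / 2 * B = rf m w / (m:ℝ)^m * (B / A) / 2 := by
        ring
      rw [heq]
      linarith
    linarith
  · have h1 : urnE b w l m n ≤ rf m w * (Real.exp (2*(m:ℝ)) * B) := by
      rw [hEdef]
      exact mul_le_mul_of_nonneg_left hPub hrfw.le
    have h2 : rf m w * (Real.exp (2*(m:ℝ)) * B) < rf m w * Real.exp (2*(m:ℝ)) * 2 * B := by
      nlinarith [mul_pos (mul_pos hrfw (Real.exp_pos (2*(m:ℝ)))) hBpos]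
    linarith
end

section
/- Let W be a positive random variable with E[W^r] = k/r, let W^(r) have the r-power bias distribution of W (E[W^r f(W)] = E[W^r]·E[f(W^(r))] for all suitable f), and let V_k ~ Beta(k,1) be independent of W^(r); set W* = V_k · W^(r). Then for every bounded function f with bounded derivative and f(0)=0, defining g(x) = f'(x) + (k−1)x^{−1} f(x), we have E[g(W*)] = r · E[W^{r−1} f(W)]. -/
open MeasureTheory Set ProbabilityTheory


lemma etid_ftc (k : ℕ) (hk : 1 ≤ k) (f : ℝ → ℝ) (hf : Differentiable ℝ f)
    (hf0 : f 0 = 0) (Cf Cd : ℝ) (hCf : ∀ x, |f x| ≤ Cf) (hCd : ∀ x, |deriv f x| ≤ Cd)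
    {w : ℝ} (hw : 0 < w) :
    ∫ v in Ioc (0:ℝ) 1, (k:ℝ) * v ^ (k-1) *
      (deriv f (v*w) + ((k:ℝ)-1) * (v*w)⁻¹ * f (v*w)) = (k:ℝ) * (f w / w) := by
  have hw0 : w ≠ 0 := hw.ne'
  set F' : ℝ → ℝ := fun v => (↑(k-1) : ℝ) * v ^ (k-1-1) * f (v*w) + v ^ (k-1) * (deriv f (v*w) * w)
    with hF'
  have hderiv : ∀ v : ℝ, HasDerivAt (fun v => v ^ (k-1) * f (v*w)) (F' v) v := by
    intro v
    have h1 : HasDerivAt (fun v : ℝ => v ^ (k-1)) ((↑(k-1) : ℝ) * v ^ (k-1-1)) v :=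
      hasDerivAt_pow (k-1) v
    have h2 : HasDerivAt (fun v : ℝ => f (v*w)) (deriv f (v*w) * w) v :=
      (hf (v*w)).hasDerivAt.comp v (hasDerivAt_mul_const w)
    exact h1.mul h2
  have hmeas : Measurable F' := by
    apply Measurable.add
    · exact (measurable_const.mul (measurable_id.pow_const _)).mul
        ((hf.continuous.measurable).comp (measurable_id.mul_const w))
    · exact (measurable_id.pow_const _).mul
        (((measurable_deriv f).comp (measurable_id.mul_const w)).mul_const w)
  have hCf0 : 0 ≤ Cf := (abs_nonneg _).trans (hCf 0)
  have hCd0 : 0 ≤ Cd := (abs_nonneg _).trans (hCd 0)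
  have hint : IntervalIntegrable F' volume 0 1 := by
    rw [intervalIntegrable_iff_integrableOn_Ioc_of_le zero_le_one]
    refine Integrable.mono' (integrable_const ((↑(k-1):ℝ) * Cf + Cd * w)) hmeas.aestronglyMeasurable ?_
    filter_upwards [ae_restrict_mem measurableSet_Ioc] with v hv
    have hv0 : 0 ≤ v := hv.1.le
    have hv1 : v ≤ 1 := hv.2
    have hp : ∀ m : ℕ, |v ^ m| ≤ 1 := by
      intro m
      rw [abs_pow]
      exact pow_le_one₀ (abs_nonneg v) (abs_le.mpr ⟨by linarith, hv1⟩)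
    have e1 : |(↑(k-1):ℝ) * v ^ (k-1-1) * f (v*w)| ≤ (↑(k-1):ℝ) * Cf := by
      rw [abs_mul, abs_mul, abs_of_nonneg (Nat.cast_nonneg _)]
      calc (↑(k-1):ℝ) * |v^(k-1-1)| * |f (v*w)|
          ≤ (↑(k-1):ℝ) * 1 * Cf :=
            mul_le_mul (mul_le_mul le_rfl (hp _) (abs_nonneg _) (Nat.cast_nonneg _)) (hCf _)
              (abs_nonneg _) (mul_nonneg (Nat.cast_nonneg _) zero_le_one)
        _ = (↑(k-1):ℝ) * Cf := by ring
    have e2 : |v ^ (k-1) * (deriv f (v*w) * w)| ≤ Cd * w := by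
      rw [abs_mul, abs_mul, abs_of_nonneg hw.le]
      calc |v^(k-1)| * (|deriv f (v*w)| * w)
          ≤ 1 * (Cd * w) :=
            mul_le_mul (hp _) (mul_le_mul (hCd _) le_rfl hw.le hCd0) (mul_nonneg (abs_nonneg _) hw.le)
              zero_le_one
        _ = Cd * w := one_mul _
    calc ‖F' v‖ ≤ |(↑(k-1):ℝ) * v ^ (k-1-1) * f (v*w)| + |v ^ (k-1) * (deriv f (v*w) * w)| :=
          norm_add_le _ _
      _ ≤ (↑(k-1):ℝ) * Cf + Cd * w := add_le_add e1 e2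
  have hFTC : ∫ v in (0:ℝ)..1, F' v = f w := by
    rw [intervalIntegral.integral_eq_sub_of_hasDerivAt (fun x _ => hderiv x) hint]
    simp [hf0, zero_mul]
  have hcongr : ∀ v ∈ Ioc (0:ℝ) 1,
      (k:ℝ) * v ^ (k-1) * (deriv f (v*w) + ((k:ℝ)-1) * (v*w)⁻¹ * f (v*w))
        = ((k:ℝ)/w) * F' v := by
    intro v hv
    have hv0 : v ≠ 0 := hv.1.ne'
    rcases Nat.lt_or_ge k 2 with h2 | h2
    · interval_cases k
      simp [hF']
      field_simp
    · have hk1 : (↑(k-1) : ℝ) = (k:ℝ) - 1 := by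
        push_cast [Nat.cast_sub hk]; ring
      have hpow : v ^ (k-1) = v ^ (k-1-1) * v := by
        rw [← pow_succ]
        congr 1
        omega
      rw [hF', hk1]
      field_simp
      rw [hpow]
      ring
  rw [setIntegral_congr_fun measurableSet_Ioc hcongr, integral_const_mul,
    ← intervalIntegral.integral_of_le zero_le_one, hFTC]
  field_simp


lemma etid_lint (k : ℕ) (hk : 1 ≤ k) {c : ℝ} (hc : 0 ≤ c) :
    ∫⁻ v in Ioc (0:ℝ) c, ENNReal.ofReal ((k:ℝ) * v ^ (k-1)) = ENNReal.ofReal (c ^ k) := by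
  rw [← ofReal_integral_eq_lintegral_ofReal]
  · congr 1
    rw [← intervalIntegral.integral_of_le hc, intervalIntegral.integral_const_mul,
      integral_pow]
    have h1 : k - 1 + 1 = k := by omega
    rw [h1, zero_pow (by omega : k ≠ 0)]
    have hk0 : (k:ℝ) ≠ 0 := Nat.cast_ne_zero.mpr (by omega)
    field_simp
    push_cast [Nat.cast_sub hk]; ring
  · exact (continuous_const.mul (continuous_pow _)).integrableOn_Ioc
  · filter_upwards [ae_restrict_mem measurableSet_Ioc] with v hv
    exact mul_nonneg (Nat.cast_nonneg _) (pow_nonneg hv.1.le _)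

lemma etid_law {Ω : Type*} [MeasurableSpace Ω] (μ : Measure Ω) [IsProbabilityMeasure μ]
    (k : ℕ) (hk : 1 ≤ k) (V : Ω → ℝ) (hV : Measurable V)
    (hbeta : ∀ x ∈ Icc (0:ℝ) 1, (μ {ω | V ω ≤ x}).toReal = x ^ k) :
    μ.map V = (volume.restrict (Ioc 0 1)).withDensity
      (fun v => ENNReal.ofReal ((k:ℝ) * v ^ (k-1))) := by
  have hmV : IsProbabilityMeasure (μ.map V) := Measure.isProbabilityMeasure_map hV.aemeasurable
  have key : ∀ x ∈ Icc (0:ℝ) 1, μ.map V (Iic x) = ENNReal.ofReal (x ^ k) := by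
    intro x hx
    rw [Measure.map_apply hV measurableSet_Iic,
      ← ENNReal.ofReal_toReal (measure_ne_top μ (V ⁻¹' Iic x))]
    have hs : V ⁻¹' Iic x = {ω | V ω ≤ x} := rfl
    rw [hs, hbeta x hx]
  refine Measure.ext_of_Iic _ _ (fun a => ?_)
  rw [withDensity_apply _ measurableSet_Iic, Measure.restrict_restrict measurableSet_Iic]
  have hset : Iic a ∩ Ioc (0:ℝ) 1 = Ioc 0 (min a 1) := by
    ext v; simp only [mem_inter_iff, mem_Iic, mem_Ioc, le_min_iff]; tauto
  rw [hset]
  rcases le_or_gt a 0 with ha | ha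
  · have h1 : Ioc (0:ℝ) (min a 1) = ∅ := Ioc_eq_empty (by simp [min_le_iff]; exact ha)
    rw [h1]
    have h3 : μ.map V (Iic 0) = 0 := by
      rw [key 0 (by simp), zero_pow (by omega : k ≠ 0), ENNReal.ofReal_zero]
    have h2 : μ.map V (Iic a) = 0 :=
      le_antisymm (h3 ▸ measure_mono (Iic_subset_Iic.2 ha)) (zero_le')
    simp [h2]
  · rcases le_or_gt a 1 with ha1 | ha1
    · rw [min_eq_left ha1, etid_lint k hk ha.le, key a ⟨ha.le, ha1⟩]
    · rw [min_eq_right ha1.le, etid_lint k hk zero_le_one]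
      have h1 : μ.map V (Iic 1) = 1 := by rw [key 1 (by simp)]; simp
      have h2 : μ.map V (Iic a) = 1 :=
        le_antisymm prob_le_one (h1 ▸ measure_mono (Iic_subset_Iic.2 ha1.le))
      rw [h2]; simp

/-- Key identity for the `(k,r)`-generalized equilibrium transform: if `W > 0` with
`E[W^r] = k/r`, `W'` has the `r`-power bias distribution of `W`, `V ~ Beta(k,1)` is
independent of `W'`, and `W* = V·W'`, then for every bounded differentiable `f`
with bounded derivative and `f(0)=0`, with `g(x) = f'(x) + (k−1)x⁻¹ f(x)`,
`E[g(W*)] = r·E[W^{r−1} f(W)]`. -/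
theorem equilibrium_transform_identity
    {Ω : Type*} [MeasurableSpace Ω] (μ : Measure Ω) [IsProbabilityMeasure μ]
    (k r : ℕ) (hk : 1 ≤ k) (hr : 1 ≤ r)
    (W W' V : Ω → ℝ) (hW : Measurable W) (hW' : Measurable W') (hV : Measurable V)
    (hWpos : ∀ ω, 0 < W ω)
    (hmom : (∫ ω, W ω ^ r ∂μ) = (k : ℝ) / r)
    (hbias : ∀ f : ℝ → ℝ, Measurable f → (∃ C, ∀ x, |f x| ≤ C) →
      (∫ ω, W ω ^ r * f (W ω) ∂μ) = ((k : ℝ) / r) * ∫ ω, f (W' ω) ∂μ)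
    (hbeta : ∀ x ∈ Icc (0:ℝ) 1, (μ {ω | V ω ≤ x}).toReal = x ^ k)
    (hindep : IndepFun V W' μ)
    (f : ℝ → ℝ) (hf : Differentiable ℝ f) (hf0 : f 0 = 0)
    (hfb : ∃ C, ∀ x, |f x| ≤ C) (hfb' : ∃ C, ∀ x, |deriv f x| ≤ C) :
    (∫ ω, (deriv f (V ω * W' ω) + ((k : ℝ) - 1) * (V ω * W' ω)⁻¹ * f (V ω * W' ω)) ∂μ)
      = (r : ℝ) * ∫ ω, W ω ^ (r - 1) * f (W ω) ∂μ := by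
  obtain ⟨Cf, hCf⟩ := hfb
  obtain ⟨Cd, hCd⟩ := hfb'
  have hCd0 : 0 ≤ Cd := (abs_nonneg _).trans (hCd 0)
  have hk0 : (k:ℝ) ≠ 0 := Nat.cast_ne_zero.mpr (by omega)
  have hr0 : (r:ℝ) ≠ 0 := Nat.cast_ne_zero.mpr (by omega)
  have hfm : Measurable f := hf.continuous.measurable
  set g : ℝ → ℝ := fun x => deriv f x + ((k:ℝ)-1) * x⁻¹ * f x with hgdef
  have hgm : Measurable g :=
    (measurable_deriv f).add ((measurable_const.mul measurable_inv).mul hfm)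
  have hlip : ∀ x : ℝ, |f x| ≤ Cd * |x| := by
    intro x
    have hL : LipschitzWith (Real.toNNReal Cd) f :=
      lipschitzWith_of_nnnorm_deriv_le hf (fun y => by
        rw [← NNReal.coe_le_coe, coe_nnnorm, Real.coe_toNNReal _ hCd0]
        simpa [Real.norm_eq_abs] using hCd y)
    have := hL.dist_le_mul x 0
    simpa [Real.dist_eq, hf0, Real.coe_toNNReal _ hCd0] using this
  have hxinv : ∀ x : ℝ, |x⁻¹ * f x| ≤ Cd := by
    intro x
    rcases eq_or_ne x 0 with h | h
    · simp [h, hCd0]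
    · rw [abs_mul, abs_inv]
      calc |x|⁻¹ * |f x| ≤ |x|⁻¹ * (Cd * |x|) := by
            gcongr
            exact hlip x
        _ = Cd := by
            rw [mul_comm Cd, ← mul_assoc, inv_mul_cancel₀ (abs_ne_zero.2 h), one_mul]
  set Cg : ℝ := Cd + |(k:ℝ)-1| * Cd with hCgdef
  have hgb : ∀ x, ‖g x‖ ≤ Cg := by
    intro x
    rw [Real.norm_eq_abs]
    calc |g x| ≤ |deriv f x| + |((k:ℝ)-1) * x⁻¹ * f x| := abs_add_le _ _
      _ ≤ Cd + |(k:ℝ)-1| * Cd := by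
          gcongr
          · exact hCd x
          · rw [mul_assoc, abs_mul]
            gcongr
            exact hxinv x
  -- W' > 0 a.e.
  have hW'null : μ (W' ⁻¹' Iic 0) = 0 := by
    have hind : Measurable ((Iic (0:ℝ)).indicator (fun _ => (1:ℝ))) :=
      measurable_const.indicator measurableSet_Iic
    have h0 : (∫ ω, W ω ^ r * (Iic (0:ℝ)).indicator (fun _ => (1:ℝ)) (W ω) ∂μ) = 0 := by
      have hz : ∀ ω, W ω ^ r * (Iic (0:ℝ)).indicator (fun _ => (1:ℝ)) (W ω) = 0 := fun ω => by
        rw [Set.indicator_of_notMem (by simpa using hWpos ω), mul_zero]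
      simp only [hz, integral_zero]
    have h2 := hbias _ hind ⟨1, fun x => by
      by_cases h : x ∈ Iic (0:ℝ) <;> simp [Set.indicator, h]⟩
    rw [h0] at h2
    have h3 : (∫ ω, (Iic (0:ℝ)).indicator (fun _ => (1:ℝ)) (W' ω) ∂μ) = 0 := by
      rcases mul_eq_zero.mp h2.symm with h | h
      · exact absurd h (div_ne_zero hk0 hr0)
      · exact h
    have h4 : (fun ω => (Iic (0:ℝ)).indicator (fun _ => (1:ℝ)) (W' ω))
        = (W' ⁻¹' Iic 0).indicator (fun _ => (1:ℝ)) := by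
      ext ω
      by_cases h : W' ω ∈ Iic (0:ℝ) <;> simp [Set.indicator, h, Set.mem_preimage]
    rw [h4, integral_indicator_const _ (hW' measurableSet_Iic)] at h3
    simp only [smul_eq_mul, mul_one] at h3
    exact (ENNReal.toReal_eq_zero_iff _).mp h3 |>.resolve_right (measure_ne_top μ _)
  haveI hmV : IsProbabilityMeasure (μ.map V) := Measure.isProbabilityMeasure_map hV.aemeasurable
  haveI hmW : IsProbabilityMeasure (μ.map W') := Measure.isProbabilityMeasure_map hW'.aemeasurable
  have hlaw := etid_law μ k hk V hV hbeta
  have hGm : Measurable (fun p : ℝ × ℝ => g (p.1 * p.2)) :=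
    hgm.comp (measurable_fst.mul measurable_snd)
  have hpair : μ.map (fun ω => (V ω, W' ω)) = (μ.map V).prod (μ.map W') :=
    (indepFun_iff_map_prod_eq_prod_map_map hV.aemeasurable hW'.aemeasurable).mp hindep
  have hGint : Integrable (fun p : ℝ × ℝ => g (p.1 * p.2)) ((μ.map V).prod (μ.map W')) :=
    Integrable.mono' (integrable_const Cg) hGm.aestronglyMeasurable
      (Filter.Eventually.of_forall fun p => hgb _)
  have step1 : (∫ ω, g (V ω * W' ω) ∂μ)
      = ∫ w, ∫ v, g (v * w) ∂(μ.map V) ∂(μ.map W') := by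
    calc (∫ ω, g (V ω * W' ω) ∂μ)
        = ∫ p : ℝ × ℝ, g (p.1 * p.2) ∂(μ.map (fun ω => (V ω, W' ω))) :=
          (MeasureTheory.integral_map ((hV.prodMk hW').aemeasurable)
            hGm.aestronglyMeasurable).symm
      _ = ∫ p : ℝ × ℝ, g (p.1 * p.2) ∂((μ.map V).prod (μ.map W')) := by rw [hpair]
      _ = ∫ w, ∫ v, g (v * w) ∂(μ.map V) ∂(μ.map W') := integral_prod_symm _ hGint
  have haeW : ∀ᵐ w ∂(μ.map W'), 0 < w := by
    rw [ae_iff]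
    have hs : {w : ℝ | ¬ 0 < w} = Iic 0 := by ext w; simp [not_lt]
    rw [hs, Measure.map_apply hW' measurableSet_Iic]
    exact hW'null
  have step2 : (∫ w, ∫ v, g (v * w) ∂(μ.map V) ∂(μ.map W'))
      = ∫ w, (k:ℝ) * (f w / w) ∂(μ.map W') := by
    refine integral_congr_ae ?_
    filter_upwards [haeW] with w hw
    rw [hlaw]
    have hd : Measurable (fun v : ℝ => ((k:ℝ) * v ^ (k-1)).toNNReal) :=
      (measurable_const.mul (measurable_id.pow_const _)).real_toNNReal
    rw [show (fun v : ℝ => ENNReal.ofReal ((k:ℝ) * v ^ (k-1)))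
        = fun v => ((((k:ℝ) * v ^ (k-1)).toNNReal : NNReal) : ENNReal) from rfl,
      integral_withDensity_eq_integral_smul hd]
    have hcg : ∀ v ∈ Ioc (0:ℝ) 1,
        ((k:ℝ) * v ^ (k-1)).toNNReal • g (v * w)
          = (k:ℝ) * v ^ (k-1) * (deriv f (v*w) + ((k:ℝ)-1) * (v*w)⁻¹ * f (v*w)) := by
      intro v hv
      rw [NNReal.smul_def, smul_eq_mul,
        Real.coe_toNNReal _ (mul_nonneg (Nat.cast_nonneg _) (pow_nonneg hv.1.le _))]
    rw [setIntegral_congr_fun measurableSet_Ioc hcg]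
    exact etid_ftc k hk f hf hf0 Cf Cd hCf hCd hw
  have hhm : Measurable (fun x : ℝ => f x / x) := hfm.div measurable_id
  have hhb : ∀ x, |f x / x| ≤ Cd := fun x => by
    rw [div_eq_mul_inv, mul_comm]; exact hxinv x
  have step3 : (∫ w, (k:ℝ) * (f w / w) ∂(μ.map W'))
      = (k:ℝ) * ∫ ω, f (W' ω) / W' ω ∂μ := by
    rw [integral_const_mul, MeasureTheory.integral_map hW'.aemeasurable
      hhm.aestronglyMeasurable]
  have hb := hbias _ hhm ⟨Cd, hhb⟩
  have hWr : ∀ ω, W ω ^ r * (f (W ω) / W ω) = W ω ^ (r-1) * f (W ω) := by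
    intro ω
    have hWne : W ω ≠ 0 := (hWpos ω).ne'
    have hps : W ω ^ r = W ω ^ (r-1) * W ω := by
      rw [← pow_succ]
      congr 1
      omega
    rw [hps]
    field_simp
  simp only [hWr] at hb
  have final : (∫ ω, g (V ω * W' ω) ∂μ) = (r:ℝ) * ∫ ω, W ω ^ (r-1) * f (W ω) ∂μ := by
    rw [step1, step2, step3, hb]
    field_simp
  exact final
end

section
/- Let B be a convex potential on (a,b) with unique minimum at x_0 and Z ~ P_B with density φ_B(x) = C_B e^{-B(x)}. For bounded h ∈ L_1(B), let f_h(x) = e^{B(x)} ∫_a^x (h(z) − E h(Z)) e^{-B(z)} dz. Then ‖f_h‖_∞ ≤ ‖h − E h(Z)‖_∞ · e^{B(x_0)}/C_B, ‖B' f_h‖_∞ ≤ ‖h − E h(Z)‖_∞, and ‖f_h'‖_∞ ≤ 2‖h − E h(Z)‖_∞. -/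
open MeasureTheory Set Real

open Filter Topology

private lemma stein_reflect_integral (A : Set ℝ) (g : ℝ → ℝ) :
    ∫ z in (fun t : ℝ => -t) ⁻¹' A, g (-z) = ∫ z in A, g z :=
  (Measure.measurePreserving_neg volume).setIntegral_preimage_emb
    (Homeomorph.neg ℝ).measurableEmbedding g A

private lemma stein_reflect_integrable {A : Set ℝ} {g : ℝ → ℝ}
    (hg : IntegrableOn g A) :
    IntegrableOn (fun z => g (-z)) ((fun t : ℝ => -t) ⁻¹' A) :=
  ((Measure.measurePreserving_neg volume).integrableOn_comp_preimage
    (Homeomorph.neg ℝ).measurableEmbedding).2 hg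

private lemma stein_tail_le {S : Set ℝ} {B B' : ℝ → ℝ}
    (hSm : MeasurableSet S)
    (htan : ∀ x ∈ S, ∀ y ∈ S, B x + B' x * (y - x) ≤ B y)
    (hint : IntegrableOn (fun z => Real.exp (-(B z))) S)
    {x : ℝ} (hx : x ∈ S) (hpos : 0 < B' x) :
    B' x * ∫ z in S ∩ Ioi x, Real.exp (-(B z)) ≤ Real.exp (-(B x)) := by
  set c := B' x with hc
  have hc0 : c ≠ 0 := ne_of_gt hpos
  have hmaj : IntegrableOn (fun z => Real.exp (-(B x + c * (z - x)))) (Ioi x) := by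
    have h0 : IntegrableOn (fun z => Real.exp (-(B x) + c * x) * Real.exp (-c * z)) (Ioi x) :=
      ((exp_neg_integrableOn_Ioi x hpos).const_mul (Real.exp (-(B x) + c * x)))
    refine h0.congr_fun (fun z _ => ?_) measurableSet_Ioi
    dsimp only; rw [← Real.exp_add]; congr 1; ring
  have h1 : ∫ z in S ∩ Ioi x, Real.exp (-(B z)) ≤
      ∫ z in S ∩ Ioi x, Real.exp (-(B x + c * (z - x))) := by
    refine setIntegral_mono_on (hint.mono_set inter_subset_left)
      (hmaj.mono_set inter_subset_right) (hSm.inter measurableSet_Ioi) (fun z hz => ?_)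
    exact Real.exp_le_exp.2 (neg_le_neg (htan x hx z hz.1))
  have h2 : ∫ z in S ∩ Ioi x, Real.exp (-(B x + c * (z - x))) ≤
      ∫ z in Ioi x, Real.exp (-(B x + c * (z - x))) := by
    refine setIntegral_mono_set hmaj ?_ (HasSubset.Subset.eventuallyLE inter_subset_right)
    exact Eventually.of_forall fun z => (Real.exp_pos _).le
  have h3 : ∫ z in Ioi x, Real.exp (-(B x + c * (z - x))) = Real.exp (-(B x)) / c := by
    have hder : ∀ z ∈ Ici x, HasDerivAt (fun z => -Real.exp (-(B x + c * (z - x))) / c)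
        (Real.exp (-(B x + c * (z - x)))) z := by
      intro z _
      have h4 : HasDerivAt (fun z : ℝ => -(B x + c * (z - x))) (-c) z := by
        exact (by simpa using (((hasDerivAt_id z).sub_const x).const_mul c).const_add (B x) :
          HasDerivAt (fun z : ℝ => B x + c * (z - x)) c z).neg
      have h5 := (h4.exp.div_const c).neg
      have h6 : -(Real.exp (-(B x + c * (z - x))) * -c / c) = Real.exp (-(B x + c * (z - x))) := by
        field_simp
      rw [← h6]
      refine h5.congr_of_eventuallyEq (Eventually.of_forall fun w => ?_)
      show -Real.exp (-(B x + c * (w - x))) / c = -(Real.exp (-(B x + c * (w - x))) / c)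
      ring
    have htend : Tendsto (fun z : ℝ => -Real.exp (-(B x + c * (z - x))) / c) atTop (𝓝 0) := by
      have h6a : Tendsto (fun z : ℝ => c * z) atTop atTop :=
        Tendsto.const_mul_atTop hpos tendsto_id
      have h6b : Tendsto (fun z : ℝ => -(c * z)) atTop atBot := tendsto_neg_atTop_atBot.comp h6a
      have h6 : Tendsto (fun z : ℝ => -(B x + c * (z - x))) atTop atBot := by
        have h6c := tendsto_atBot_add_const_right atTop (-(B x) + c * x) h6b
        refine h6c.congr (fun z => by ring)
      have h7 := (Real.tendsto_exp_atBot.comp h6).neg.div_const c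
      simpa using h7
    rw [MeasureTheory.integral_Ioi_of_hasDerivAt_of_tendsto' hder hmaj htend]
    norm_num
    ring
  have hfin : ∫ z in S ∩ Ioi x, Real.exp (-(B z)) ≤ Real.exp (-(B x)) / c :=
    (h1.trans h2).trans_eq h3
  calc c * ∫ z in S ∩ Ioi x, Real.exp (-(B z)) ≤ c * (Real.exp (-(B x)) / c) :=
        mul_le_mul_of_nonneg_left hfin hpos.le
    _ = Real.exp (-(B x)) := by field_simp

private lemma stein_F_hasDeriv {S : Set ℝ} {g : ℝ → ℝ}
    (hSopen : IsOpen S) (hg : ContinuousOn g S) (hint : IntegrableOn g S)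
    {x : ℝ} (hx : x ∈ S) :
    HasDerivAt (fun y => ∫ z in S ∩ Iio y, g z) (g x) x := by
  rcases Metric.isOpen_iff.mp hSopen x hx with ⟨ε, hε, hball⟩
  set c := x - ε / 2 with hcdef
  set d := x + ε / 2 with hddef
  have hIcc : Icc c d ⊆ S := by
    intro z hz
    apply hball
    rw [Metric.mem_ball, Real.dist_eq, abs_lt]
    obtain ⟨h1, h2⟩ := hz
    constructor <;> [simp only [hcdef] at h1; simp only [hddef] at h2] <;> linarith
  have hcx : c < x := by simp only [hcdef]; linarith
  have hxd : x < d := by simp only [hddef]; linarith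
  have hmem : Ioo c d ∈ 𝓝 x := Ioo_mem_nhds hcx hxd
  have key : ∀ y ∈ Ioo c d,
      ∫ z in S ∩ Iio y, g z = (∫ z in S ∩ Iio c, g z) + ∫ t in c..y, g t := by
    intro y hy
    have hsplit : S ∩ Iio y = (S ∩ Iio c) ∪ Ico c y := by
      ext z
      constructor
      · rintro ⟨hzS, hzy⟩
        rcases lt_or_ge z c with hzc | hcz
        · exact Or.inl ⟨hzS, hzc⟩
        · exact Or.inr ⟨hcz, hzy⟩
      · rintro (⟨hzS, hzc⟩ | ⟨hcz, hzy⟩)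
        · exact ⟨hzS, hzc.trans hy.1⟩
        · exact ⟨hIcc ⟨hcz, hzy.le.trans hy.2.le⟩, hzy⟩
    have hdisj : Disjoint (S ∩ Iio c) (Ico c y) := by
      rw [disjoint_left]
      rintro z ⟨_, hzc⟩ ⟨hcz, _⟩
      exact absurd hcz (not_le.2 hzc)
    have hint1 : IntegrableOn g (S ∩ Iio c) := hint.mono_set inter_subset_left
    have hint2 : IntegrableOn g (Ico c y) :=
      hint.mono_set ((Ico_subset_Icc_self.trans (Icc_subset_Icc_right hy.2.le)).trans hIcc)
    rw [hsplit, setIntegral_union hdisj measurableSet_Ico hint1 hint2,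
      intervalIntegral.integral_of_le hy.1.le]
    congr 1
    exact setIntegral_congr_set Ico_ae_eq_Ioc
  have hii : IntervalIntegrable g volume c x := by
    refine (hint.mono_set ?_).intervalIntegrable
    rw [uIcc_of_le hcx.le]
    exact (Icc_subset_Icc_right hxd.le).trans hIcc
  have hmeasAt : StronglyMeasurableAtFilter g (𝓝 x) :=
    hg.stronglyMeasurableAtFilter hSopen x hx
  have hcontAt : ContinuousAt g x := hg.continuousAt (hSopen.mem_nhds hx)
  have hd : HasDerivAt (fun y => (∫ z in S ∩ Iio c, g z) + ∫ t in c..y, g t) (g x) x :=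
    (intervalIntegral.integral_hasDerivAt_right hii hmeasAt hcontAt).const_add _
  refine hd.congr_of_eventuallyEq ?_
  filter_upwards [hmem] with y hy
  exact key y hy

private lemma stein_oneSide {S : Set ℝ} {B B' : ℝ → ℝ}
    (hSopen : IsOpen S)
    (hderiv : ∀ x ∈ S, HasDerivAt B (B' x) x)
    (htan : ∀ x ∈ S, ∀ y ∈ S, B x + B' x * (y - x) ≤ B y)
    (hint : IntegrableOn (fun z => Real.exp (-(B z))) S)
    {x0 x : ℝ} (hx0 : x0 ∈ S) (hB'0 : 0 ≤ B' x0) (hx : x ∈ S) (hxx0 : x0 ≤ x)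
    (hsub : Icc x0 x ⊆ S) :
    0 ≤ B' x ∧
    B' x * (Real.exp (B x) * ∫ z in S ∩ Ioi x, Real.exp (-(B z))) ≤ 1 ∧
    Real.exp (B x) * (∫ z in S ∩ Ioi x, Real.exp (-(B z))) ≤
      Real.exp (B x0) * ∫ z in S, Real.exp (-(B z)) := by
  have hSm : MeasurableSet S := hSopen.measurableSet
  have hBcont : ContinuousOn B S := fun y hy => ((hderiv y hy).continuousAt).continuousWithinAt
  have hψcont : ContinuousOn (fun z => Real.exp (-(B z))) S :=
    Real.continuous_exp.comp_continuousOn hBcont.neg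
  have hmono : ∀ u ∈ S, ∀ v ∈ S, u ≤ v → B' u ≤ B' v := by
    intro u hu v hv huv
    rcases huv.eq_or_lt with rfl | hlt
    · exact le_refl _
    · have h1 := htan u hu v hv
      have h2 := htan v hv u hu
      nlinarith
  have hB'x : 0 ≤ B' x := hB'0.trans (hmono x0 hx0 x hx hxx0)
  have part2 : ∀ y ∈ S, 0 ≤ B' y →
      B' y * (Real.exp (B y) * ∫ z in S ∩ Ioi y, Real.exp (-(B z))) ≤ 1 := by
    intro y hy hy0
    rcases hy0.eq_or_lt with h0 | hpos
    · rw [← h0]; norm_num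
    · have htle := stein_tail_le hSm htan hint hy hpos
      calc B' y * (Real.exp (B y) * ∫ z in S ∩ Ioi y, Real.exp (-(B z)))
          = Real.exp (B y) * (B' y * ∫ z in S ∩ Ioi y, Real.exp (-(B z))) := by ring
        _ ≤ Real.exp (B y) * Real.exp (-(B y)) :=
            mul_le_mul_of_nonneg_left htle (Real.exp_pos _).le
        _ = 1 := by rw [← Real.exp_add]; simp
  refine ⟨hB'x, part2 x hx hB'x, ?_⟩
  set I := ∫ z in S, Real.exp (-(B z)) with hI
  set F := fun y => ∫ z in S ∩ Iio y, Real.exp (-(B z)) with hF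
  have hIoiF : ∀ y : ℝ, ∫ z in S ∩ Ioi y, Real.exp (-(B z)) = I - F y := by
    intro y
    have hsplit : I = F y + ∫ z in S ∩ Ici y, Real.exp (-(B z)) := by
      rw [← setIntegral_union]
      · rw [← inter_union_distrib_left, Iio_union_Ici, inter_univ]
      · rw [disjoint_left]; rintro z ⟨_, hz1⟩ ⟨_, hz2⟩; exact absurd (mem_Ici.1 hz2) (not_le.2 (mem_Iio.1 hz1))
      · exact hSm.inter measurableSet_Ici
      · exact hint.mono_set inter_subset_left
      · exact hint.mono_set inter_subset_left
    have heq : ∫ z in S ∩ Ici y, Real.exp (-(B z)) = ∫ z in S ∩ Ioi y, Real.exp (-(B z)) :=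
      setIntegral_congr_set (MeasureTheory.ae_eq_set_inter (EventuallyEq.refl _ _)
        Ioi_ae_eq_Ici).symm
    linarith
  set g := fun y => Real.exp (B y) * (I - F y) with hg
  have hgd : ∀ y ∈ S, HasDerivAt g (B' y * g y - 1) y := by
    intro y hy
    have h1 : HasDerivAt (fun t => Real.exp (B t)) (Real.exp (B y) * B' y) y := (hderiv y hy).exp
    have h2 : HasDerivAt (fun t => I - F t) (-(Real.exp (-(B y)))) y :=
      (stein_F_hasDeriv hSopen hψcont hint hy).const_sub I
    have h3 := h1.mul h2
    refine h3.congr_deriv ?_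
    have : Real.exp (B y) * Real.exp (-(B y)) = 1 := by rw [← Real.exp_add]; simp
    show _ = B' y * (Real.exp (B y) * (I - F y)) - 1
    nlinarith [this]
  have hganti : AntitoneOn g (Icc x0 x) := by
    refine antitoneOn_of_deriv_nonpos (convex_Icc _ _)
      (fun y hy => ((hgd y (hsub hy)).continuousAt).continuousWithinAt)
      (fun y hy => ?_) (fun y hy => ?_)
    · rw [interior_Icc] at hy
      exact ((hgd y (hsub (Ioo_subset_Icc_self hy))).differentiableAt).differentiableWithinAt
    · rw [interior_Icc] at hy
      have hyS : y ∈ S := hsub (Ioo_subset_Icc_self hy)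
      rw [(hgd y hyS).deriv]
      have hy0 : 0 ≤ B' y := hB'0.trans (hmono x0 hx0 y hyS hy.1.le)
      have := part2 y hyS hy0
      rw [hIoiF y] at this
      simp only [hg]
      linarith
  have hgle : g x ≤ g x0 := hganti (left_mem_Icc.2 hxx0) (right_mem_Icc.2 hxx0) hxx0
  have hFx0 : 0 ≤ F x0 := setIntegral_nonneg (hSm.inter measurableSet_Iio)
    (fun z _ => (Real.exp_pos _).le)
  calc Real.exp (B x) * (∫ z in S ∩ Ioi x, Real.exp (-(B z))) = g x := by rw [hIoiF x]
    _ ≤ g x0 := hgle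
    _ ≤ Real.exp (B x0) * I := by
        simp only [hg]
        nlinarith [Real.exp_pos (B x0)]

set_option maxHeartbeats 2000000 in
/-- Uniform bounds on the solution of the Stein equation for a distribution with a
convex potential `B` on `(a,b)` (with possibly infinite endpoints), density
`C_B e^{-B}`, and unique minimum of `B` at `x₀`: with `h` bounded, and
`f_h(x) = e^{B(x)} ∫_a^x (h(z) − E h(Z)) e^{-B(z)} dz`,
we have `‖f_h‖ ≤ ‖h − Eh‖ e^{B(x₀)}/C_B`, `‖B' f_h‖ ≤ ‖h − Eh‖`, `‖f_h'‖ ≤ 2‖h − Eh‖`. -/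
theorem stein_solution_bounds_convex_potential
    (a b : EReal) (hab : a < b)
    (B B' : ℝ → ℝ)
    (S : Set ℝ) (hS : S = {x : ℝ | a < (x : EReal) ∧ (x : EReal) < b})
    (hconv : ConvexOn ℝ S B)
    (hderiv : ∀ x ∈ S, HasDerivAt B (B' x) x)
    (hint : IntegrableOn (fun z => Real.exp (-(B z))) S)
    (x0 : ℝ) (hx0 : x0 ∈ S) (hmin : IsMinOn B S x0)
    (huniq : ∀ y ∈ S, IsMinOn B S y → y = x0)
    (h : ℝ → ℝ) (hmeas : Measurable h)
    (hL1 : IntegrableOn (fun z => |h z| * Real.exp (-(B z))) S)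
    (CB : ℝ) (hCB : CB = (∫ z in S, Real.exp (-(B z)))⁻¹)
    (Eh : ℝ) (hEh : Eh = CB * ∫ z in S, h z * Real.exp (-(B z)))
    (f : ℝ → ℝ)
    (hf : ∀ x, f x = Real.exp (B x) * ∫ z in S ∩ Iio x, (h z - Eh) * Real.exp (-(B z)))
    (M : ℝ) (hM : ∀ z ∈ S, |h z - Eh| ≤ M) :
    ∀ x ∈ S,
      |f x| ≤ M * Real.exp (B x0) / CB ∧
      |B' x * f x| ≤ M ∧
      |deriv f x| ≤ 2 * M := by
  have hSopen : IsOpen S := by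
    rw [hS]
    exact isOpen_Ioo.preimage continuous_coe_real_ereal
  have hSm : MeasurableSet S := hSopen.measurableSet
  have hIccS : ∀ u v : ℝ, u ∈ S → v ∈ S → Icc u v ⊆ S := by
    intro u v hu hv z hz
    rw [hS] at hu hv ⊢
    exact ⟨lt_of_lt_of_le hu.1 (EReal.coe_le_coe_iff.2 hz.1),
      lt_of_le_of_lt (EReal.coe_le_coe_iff.2 hz.2) hv.2⟩
  have hBcont : ContinuousOn B S := fun y hy => ((hderiv y hy).continuousAt).continuousWithinAt
  have hψcont : ContinuousOn (fun z => Real.exp (-(B z))) S :=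
    Real.continuous_exp.comp_continuousOn hBcont.neg
  -- tangent line property
  have htan : ∀ x ∈ S, ∀ y ∈ S, B x + B' x * (y - x) ≤ B y := by
    intro x hx y hy
    rcases lt_trichotomy x y with hlt | rfl | hgt
    · have hsl := hconv.le_slope_of_hasDerivAt hx hy hlt (hderiv x hx)
      rw [slope_def_field] at hsl
      have hy0 : (0:ℝ) < y - x := sub_pos.2 hlt
      have := (le_div_iff₀ hy0).1 hsl
      linarith
    · simp
    · have hsl := hconv.slope_le_of_hasDerivAt hy hx hgt (hderiv x hx)
      rw [slope_def_field] at hsl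
      have hx0' : (0:ℝ) < x - y := sub_pos.2 hgt
      have := (div_le_iff₀ hx0').1 hsl
      nlinarith
  have hB'x0 : B' x0 = 0 :=
    (hmin.isLocalMin (hSopen.mem_nhds hx0)).hasDerivAt_eq_zero (hderiv x0 hx0)
  have hI : 0 < ∫ z in S, Real.exp (-(B z)) := by
    rw [setIntegral_pos_iff_support_of_nonneg_ae
      (Eventually.of_forall fun z => (Real.exp_pos _).le) hint]
    have : (Function.support fun z => Real.exp (-(B z))) = univ := by
      ext z; simp [Function.mem_support, (Real.exp_pos _).ne']
    rw [this, univ_inter]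
    exact hSopen.measure_pos volume ⟨x0, hx0⟩
  have hCBpos : 0 < CB := by rw [hCB]; exact inv_pos.2 hI
  have hψaesm : AEStronglyMeasurable (fun z => Real.exp (-(B z))) (volume.restrict S) :=
    hψcont.aestronglyMeasurable hSm
  have hhψ : IntegrableOn (fun z => (h z - Eh) * Real.exp (-(B z))) S := by
    have hsm : AEStronglyMeasurable (fun z => (h z - Eh) * Real.exp (-(B z)))
        (volume.restrict S) :=
      ((hmeas.sub measurable_const).aestronglyMeasurable).mul hψaesm
    refine Integrable.mono' (hL1.add (hint.const_mul |Eh|)) hsm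
      (Eventually.of_forall fun z => ?_)
    have h1 : |h z - Eh| ≤ |h z| + |Eh| := abs_sub _ _
    have h2 := (Real.exp_pos (-(B z))).le
    rw [Real.norm_eq_abs, abs_mul, abs_of_nonneg h2]
    simp only [Pi.add_apply]
    nlinarith
  have hhψ' : IntegrableOn (fun z => h z * Real.exp (-(B z))) S := by
    have hsm : AEStronglyMeasurable (fun z => h z * Real.exp (-(B z)))
        (volume.restrict S) := (hmeas.aestronglyMeasurable).mul hψaesm
    refine Integrable.mono' hL1 hsm (Eventually.of_forall fun z => ?_)
    rw [Real.norm_eq_abs, abs_mul, abs_of_nonneg (Real.exp_pos _).le]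
  have htotal : ∫ z in S, (h z - Eh) * Real.exp (-(B z)) = 0 := by
    have heq : (fun z => (h z - Eh) * Real.exp (-(B z)))
        = fun z => h z * Real.exp (-(B z)) - Eh * Real.exp (-(B z)) := by
      funext z; ring
    rw [heq, integral_sub hhψ' (hint.const_mul Eh), integral_const_mul, hEh, hCB]
    field_simp
    ring
  have hdecomp : ∀ (x : ℝ) (φ : ℝ → ℝ), IntegrableOn φ S volume →
      (∫ z in S, φ z) = (∫ z in S ∩ Iio x, φ z) + ∫ z in S ∩ Ioi x, φ z := by
    intro x φ hφ
    have hsplit : (∫ z in S, φ z) = (∫ z in S ∩ Iio x, φ z) + ∫ z in S ∩ Ici x, φ z := by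
      rw [← setIntegral_union]
      · rw [← inter_union_distrib_left, Iio_union_Ici, inter_univ]
      · rw [disjoint_left]
        rintro z ⟨_, hz1⟩ ⟨_, hz2⟩
        exact absurd (mem_Ici.1 hz2) (not_le.2 (mem_Iio.1 hz1))
      · exact hSm.inter measurableSet_Ici
      · exact hφ.mono_set inter_subset_left
      · exact hφ.mono_set inter_subset_left
    have heq2 : ∫ z in S ∩ Ici x, φ z = ∫ z in S ∩ Ioi x, φ z :=
      setIntegral_congr_set (MeasureTheory.ae_eq_set_inter (EventuallyEq.refl _ _)
        Ioi_ae_eq_Ici).symm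
    rw [hsplit, heq2]
  have hsplitLR : ∀ x : ℝ, (∫ z in S ∩ Iio x, (h z - Eh) * Real.exp (-(B z)))
      = - ∫ z in S ∩ Ioi x, (h z - Eh) * Real.exp (-(B z)) := by
    intro x
    have := hdecomp x _ hhψ
    rw [htotal] at this
    linarith
  have habs : ∀ A : Set ℝ, A ⊆ S → MeasurableSet A →
      |∫ z in A, (h z - Eh) * Real.exp (-(B z))| ≤ M * ∫ z in A, Real.exp (-(B z)) := by
    intro A hA hAm
    calc |∫ z in A, (h z - Eh) * Real.exp (-(B z))|
        ≤ ∫ z in A, |h z - Eh| * Real.exp (-(B z)) := by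
          simpa [Real.norm_eq_abs, abs_mul, abs_of_nonneg (Real.exp_pos _).le] using
            norm_integral_le_integral_norm (μ := volume.restrict A)
              (f := fun z => (h z - Eh) * Real.exp (-(B z)))
      _ ≤ ∫ z in A, M * Real.exp (-(B z)) := by
          have habsint : IntegrableOn (fun z => |h z - Eh| * Real.exp (-(B z))) A := by
            have h1 : IntegrableOn (fun z => |(h z - Eh) * Real.exp (-(B z))|) A :=
              (hhψ.mono_set hA).abs
            exact h1.congr_fun
              (fun z _ => by dsimp only; rw [abs_mul, abs_of_nonneg (Real.exp_pos _).le]) hAm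
          exact setIntegral_mono_on habsint ((hint.mono_set hA).const_mul M) hAm
            (fun z hz => mul_le_mul_of_nonneg_right (hM z (hA hz)) (Real.exp_pos _).le)
      _ = M * ∫ z in A, Real.exp (-(B z)) := integral_const_mul _ _
  have hMpos : 0 ≤ M := le_trans (abs_nonneg _) (hM x0 hx0)
  intro x hxS
  have key : |f x| ≤ M * (Real.exp (B x0) * ∫ z in S, Real.exp (-(B z))) ∧
      |B' x * f x| ≤ M := by
    rcases le_total x0 x with hc | hc
    · obtain ⟨hB'x, h2, h3⟩ := stein_oneSide hSopen hderiv htan hint hx0 hB'x0.ge hxS hc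
        (hIccS _ _ hx0 hxS)
      have hfx : f x = -(Real.exp (B x) * ∫ z in S ∩ Ioi x, (h z - Eh) * Real.exp (-(B z))) := by
        rw [hf x, hsplitLR x]; ring
      have habs' := habs (S ∩ Ioi x) inter_subset_left (hSm.inter measurableSet_Ioi)
      have hexp := (Real.exp_pos (B x)).le
      constructor
      · rw [hfx, abs_neg, abs_mul, abs_of_nonneg hexp]
        calc Real.exp (B x) * |∫ z in S ∩ Ioi x, (h z - Eh) * Real.exp (-(B z))|
            ≤ Real.exp (B x) * (M * ∫ z in S ∩ Ioi x, Real.exp (-(B z))) :=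
              mul_le_mul_of_nonneg_left habs' hexp
          _ = M * (Real.exp (B x) * ∫ z in S ∩ Ioi x, Real.exp (-(B z))) := by ring
          _ ≤ M * (Real.exp (B x0) * ∫ z in S, Real.exp (-(B z))) :=
              mul_le_mul_of_nonneg_left h3 hMpos
      · calc |B' x * f x| = B' x * (Real.exp (B x) *
              |∫ z in S ∩ Ioi x, (h z - Eh) * Real.exp (-(B z))|) := by
              rw [hfx, abs_mul, abs_neg, abs_mul, abs_of_nonneg hexp, abs_of_nonneg hB'x]
          _ ≤ B' x * (Real.exp (B x) * (M * ∫ z in S ∩ Ioi x, Real.exp (-(B z)))) :=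
              mul_le_mul_of_nonneg_left (mul_le_mul_of_nonneg_left habs' hexp) hB'x
          _ = M * (B' x * (Real.exp (B x) * ∫ z in S ∩ Ioi x, Real.exp (-(B z)))) := by ring
          _ ≤ M * 1 := mul_le_mul_of_nonneg_left h2 hMpos
          _ = M := mul_one M
    · -- reflected case
      have hTopen : IsOpen ((fun t : ℝ => -t) ⁻¹' S) := hSopen.preimage continuous_neg
      have hTd : ∀ y ∈ (fun t : ℝ => -t) ⁻¹' S,
          HasDerivAt (fun z => B (-z)) ((fun z => -B' (-z)) y) y := by
        intro y hy
        have h1 := (hderiv (-y) hy).comp y (hasDerivAt_neg y)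
        simpa [Function.comp_def] using h1
      have hTtan : ∀ u ∈ (fun t : ℝ => -t) ⁻¹' S, ∀ v ∈ (fun t : ℝ => -t) ⁻¹' S,
          B (-u) + (fun z => -B' (-z)) u * (v - u) ≤ B (-v) := by
        intro u hu v hv
        have h1 := htan (-u) hu (-v) hv
        have h2 : B' (-u) * (-v - -u) = -B' (-u) * (v - u) := by ring
        simp only []
        linarith [h2 ▸ h1]
      have hTint : IntegrableOn (fun z => Real.exp (-(B (-z)))) ((fun t : ℝ => -t) ⁻¹' S) :=
        stein_reflect_integrable hint
      have hx0T : -x0 ∈ (fun t : ℝ => -t) ⁻¹' S := by simpa using hx0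
      have hxT : -x ∈ (fun t : ℝ => -t) ⁻¹' S := by simpa using hxS
      have hB'0T : (0:ℝ) ≤ -B' (-(-x0)) := by rw [neg_neg, hB'x0]; norm_num
      have hsubT : Icc (-x0) (-x) ⊆ (fun t : ℝ => -t) ⁻¹' S := by
        intro t ht
        have h1 : -x0 ≤ t := ht.1
        have h2 : t ≤ -x := ht.2
        have h3 : x ≤ -t := by linarith
        have h4 : -t ≤ x0 := by linarith
        show -t ∈ S
        exact hIccS x x0 hxS hx0 ⟨h3, h4⟩
      obtain ⟨hB'neg, h2, h3⟩ := stein_oneSide hTopen hTd hTtan hTint hx0T hB'0T hxT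
        (neg_le_neg hc) hsubT
      have hTIoi : ((fun t : ℝ => -t) ⁻¹' S) ∩ Ioi (-x) = (fun t : ℝ => -t) ⁻¹' (S ∩ Iio x) := by
        ext t
        simp only [mem_inter_iff, mem_preimage, mem_Ioi, mem_Iio]
        constructor
        · rintro ⟨h1', h2'⟩; exact ⟨h1', by linarith⟩
        · rintro ⟨h1', h2'⟩; exact ⟨h1', by linarith⟩
      have hIio1 : (∫ z in ((fun t : ℝ => -t) ⁻¹' S) ∩ Ioi (-x), Real.exp (-(B (-z))))
          = ∫ z in S ∩ Iio x, Real.exp (-(B z)) := by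
        rw [hTIoi]; exact stein_reflect_integral (S ∩ Iio x) (fun w => Real.exp (-(B w)))
      have hTall : (∫ z in (fun t : ℝ => -t) ⁻¹' S, Real.exp (-(B (-z))))
          = ∫ z in S, Real.exp (-(B z)) := stein_reflect_integral S (fun w => Real.exp (-(B w)))
      simp only [neg_neg] at hB'neg h2 h3
      rw [hIio1] at h2 h3
      rw [hTall] at h3
      have hfx : f x = Real.exp (B x) * ∫ z in S ∩ Iio x, (h z - Eh) * Real.exp (-(B z)) := hf x
      have habs' := habs (S ∩ Iio x) inter_subset_left (hSm.inter measurableSet_Iio)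
      have hexp := (Real.exp_pos (B x)).le
      constructor
      · rw [hfx, abs_mul, abs_of_nonneg hexp]
        calc Real.exp (B x) * |∫ z in S ∩ Iio x, (h z - Eh) * Real.exp (-(B z))|
            ≤ Real.exp (B x) * (M * ∫ z in S ∩ Iio x, Real.exp (-(B z))) :=
              mul_le_mul_of_nonneg_left habs' hexp
          _ = M * (Real.exp (B x) * ∫ z in S ∩ Iio x, Real.exp (-(B z))) := by ring
          _ ≤ M * (Real.exp (B x0) * ∫ z in S, Real.exp (-(B z))) :=
              mul_le_mul_of_nonneg_left h3 hMpos
      · calc |B' x * f x| = (-B' x) * (Real.exp (B x) *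
              |∫ z in S ∩ Iio x, (h z - Eh) * Real.exp (-(B z))|) := by
              rw [hfx, abs_mul, abs_mul, abs_of_nonneg hexp, abs_of_nonpos (by linarith : B' x ≤ 0)]
          _ ≤ (-B' x) * (Real.exp (B x) * (M * ∫ z in S ∩ Iio x, Real.exp (-(B z)))) :=
              mul_le_mul_of_nonneg_left (mul_le_mul_of_nonneg_left habs' hexp) hB'neg
          _ = M * (-B' x * (Real.exp (B x) * ∫ z in S ∩ Iio x, Real.exp (-(B z)))) := by ring
          _ ≤ M * 1 := mul_le_mul_of_nonneg_left h2 hMpos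
          _ = M := mul_one M
  have bound1 : |f x| ≤ M * Real.exp (B x0) / CB := by
    have : M * Real.exp (B x0) / CB = M * (Real.exp (B x0) * ∫ z in S, Real.exp (-(B z))) := by
      rw [hCB, div_eq_mul_inv, inv_inv]; ring
    rw [this]; exact key.1
  refine ⟨bound1, key.2, ?_⟩
  by_cases hd : DifferentiableAt ℝ f x
  · have hGf : (fun y => ∫ z in S ∩ Iio y, (h z - Eh) * Real.exp (-(B z)))
        = fun y => Real.exp (-(B y)) * f y := by
      funext y
      rw [hf y, ← mul_assoc, ← Real.exp_add]
      simp
    have hexpd : HasDerivAt (fun y => Real.exp (-(B y))) (Real.exp (-(B x)) * -(B' x)) x :=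
      ((hderiv x hxS).neg).exp
    set D := Real.exp (-(B x)) * -(B' x) * f x + Real.exp (-(B x)) * deriv f x with hDdef
    have hGd : HasDerivAt (fun y => ∫ z in S ∩ Iio y, (h z - Eh) * Real.exp (-(B z))) D x := by
      rw [hGf]
      exact hexpd.mul hd.hasDerivAt
    have hDbound : |D| ≤ M * Real.exp (-(B x)) := by
      refine le_of_forall_pos_le_add fun ε hε => ?_
      have hMpos1 : (0:ℝ) < M + 1 := by linarith
      set ε' := ε / (M + 1) with hε'def
      have hε'pos : 0 < ε' := div_pos hε hMpos1
      have hcont : ContinuousAt (fun z => Real.exp (-(B z))) x :=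
        hψcont.continuousAt (hSopen.mem_nhds hxS)
      have h8 : ∀ᶠ z in 𝓝 x, Real.exp (-(B z)) < Real.exp (-(B x)) + ε' :=
        hcont.eventually_lt_const (by linarith)
      have hSev : ∀ᶠ z in 𝓝 x, z ∈ S := hSopen.mem_nhds hxS
      obtain ⟨δ, hδpos, hδ⟩ := Metric.eventually_nhds_iff_ball.mp (h8.and hSev)
      set C := M * (Real.exp (-(B x)) + ε') with hCdef
      have hCpos : 0 ≤ C := by
        have := (Real.exp_pos (-(B x))).le
        apply mul_nonneg hMpos
        linarith
      have hseg : ∀ u v : ℝ, u ≤ v → u ∈ Metric.ball x δ → v ∈ Metric.ball x δ →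
          |(∫ z in S ∩ Iio v, (h z - Eh) * Real.exp (-(B z))) -
            ∫ z in S ∩ Iio u, (h z - Eh) * Real.exp (-(B z))| ≤ C * (v - u) := by
        intro u v huv hu hv
        rw [Metric.mem_ball, Real.dist_eq, abs_lt] at hu hv
        have hball : Ico u v ⊆ Metric.ball x δ := by
          intro z hz
          rw [Metric.mem_ball, Real.dist_eq, abs_lt]
          have h1 := hz.1
          have h2 := hz.2
          constructor
          · linarith [hu.1]
          · linarith [hv.2]
        have hsplit : S ∩ Iio v = (S ∩ Iio u) ∪ (S ∩ Ico u v) := by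
          ext z
          simp only [mem_inter_iff, mem_union, mem_Iio, mem_Ico]
          constructor
          · rintro ⟨hzS, hzv⟩
            rcases lt_or_ge z u with hzu | huz
            · exact Or.inl ⟨hzS, hzu⟩
            · exact Or.inr ⟨hzS, huz, hzv⟩
          · rintro (⟨hzS, hzu⟩ | ⟨hzS, huz, hzv⟩)
            · exact ⟨hzS, lt_of_lt_of_le hzu huv⟩
            · exact ⟨hzS, hzv⟩
        have hdisj2 : Disjoint (S ∩ Iio u) (S ∩ Ico u v) := by
          rw [disjoint_left]
          rintro z ⟨_, hz1⟩ ⟨_, hz2⟩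
          exact absurd hz2.1 (not_le.2 (mem_Iio.1 hz1))
        have hGsplit : (∫ z in S ∩ Iio v, (h z - Eh) * Real.exp (-(B z)))
            - (∫ z in S ∩ Iio u, (h z - Eh) * Real.exp (-(B z)))
            = ∫ z in S ∩ Ico u v, (h z - Eh) * Real.exp (-(B z)) := by
          rw [hsplit, setIntegral_union hdisj2 (hSm.inter measurableSet_Ico)
            (hhψ.mono_set inter_subset_left) (hhψ.mono_set inter_subset_left)]
          ring
        rw [hGsplit]
        have hfinite : volume (S ∩ Ico u v) < ⊤ :=
          lt_of_le_of_lt (measure_mono inter_subset_right) measure_Ico_lt_top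
        have habsint : IntegrableOn (fun z => |h z - Eh| * Real.exp (-(B z))) (S ∩ Ico u v) := by
          have h1 : IntegrableOn (fun z => |(h z - Eh) * Real.exp (-(B z))|) (S ∩ Ico u v) :=
            (hhψ.mono_set inter_subset_left).abs
          exact h1.congr_fun
            (fun z _ => by dsimp only; rw [abs_mul, abs_of_nonneg (Real.exp_pos _).le])
            (hSm.inter measurableSet_Ico)
        calc |∫ z in S ∩ Ico u v, (h z - Eh) * Real.exp (-(B z))|
            ≤ ∫ z in S ∩ Ico u v, |h z - Eh| * Real.exp (-(B z)) := by
              simpa [Real.norm_eq_abs, abs_mul, abs_of_nonneg (Real.exp_pos _).le] using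
                norm_integral_le_integral_norm (μ := volume.restrict (S ∩ Ico u v))
                  (f := fun z => (h z - Eh) * Real.exp (-(B z)))
          _ ≤ ∫ _z in S ∩ Ico u v, C := by
              refine setIntegral_mono_on habsint
                (integrableOn_const hfinite.ne) (hSm.inter measurableSet_Ico)
                (fun z hz => ?_)
              have hzb := hδ z (hball hz.2)
              exact mul_le_mul (hM z hz.1) hzb.1.le (Real.exp_pos _).le hMpos
          _ = C * (volume (S ∩ Ico u v)).toReal := by
              rw [setIntegral_const, smul_eq_mul, mul_comm]; rfl
          _ ≤ C * (v - u) := by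
              refine mul_le_mul_of_nonneg_left ?_ hCpos
              have hle : volume (S ∩ Ico u v) ≤ ENNReal.ofReal (v - u) := by
                calc volume (S ∩ Ico u v) ≤ volume (Ico u v) := measure_mono inter_subset_right
                  _ = ENNReal.ofReal (v - u) := Real.volume_Ico
              exact ENNReal.toReal_le_of_le_ofReal (sub_nonneg.2 huv) hle
      have hev2 : ∀ᶠ y in 𝓝 x, ‖(∫ z in S ∩ Iio y, (h z - Eh) * Real.exp (-(B z))) -
          ∫ z in S ∩ Iio x, (h z - Eh) * Real.exp (-(B z))‖ ≤ C * ‖y - x‖ := by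
        filter_upwards [Metric.ball_mem_nhds x hδpos] with y hy
        have hxball : x ∈ Metric.ball x δ := Metric.mem_ball_self hδpos
        rcases le_total x y with hxy | hyx
        · have := hseg x y hxy hxball hy
          rw [Real.norm_eq_abs, Real.norm_eq_abs, abs_of_nonneg (sub_nonneg.2 hxy)]
          exact this
        · have := hseg y x hyx hy hxball
          rw [Real.norm_eq_abs, Real.norm_eq_abs, abs_sub_comm, abs_sub_comm y x,
            abs_of_nonneg (sub_nonneg.2 hyx)]
          exact this
      have hlip := hGd.le_of_lip' hCpos hev2
      rw [Real.norm_eq_abs] at hlip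
      have h9 : M * ε' ≤ (M + 1) * ε' := by nlinarith [hε'pos.le]
      have h10 : (M + 1) * ε' = ε := by rw [hε'def]; field_simp
      calc |D| ≤ C := hlip
        _ = M * Real.exp (-(B x)) + M * ε' := by rw [hCdef]; ring
        _ ≤ M * Real.exp (-(B x)) + ε := by linarith
    have hee : Real.exp (B x) * Real.exp (-(B x)) = 1 := by rw [← Real.exp_add]; simp
    have hid : deriv f x = B' x * f x + Real.exp (B x) * D := by
      rw [hDdef]
      linear_combination (B' x * f x - deriv f x) * hee
    calc |deriv f x| = |B' x * f x + Real.exp (B x) * D| := by rw [hid]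
      _ ≤ |B' x * f x| + |Real.exp (B x) * D| := abs_add_le _ _
      _ ≤ M + Real.exp (B x) * (M * Real.exp (-(B x))) := by
          refine add_le_add key.2 ?_
          rw [abs_mul, abs_of_nonneg (Real.exp_pos _).le]
          exact mul_le_mul_of_nonneg_left hDbound (Real.exp_pos _).le
      _ = M + M * (Real.exp (B x) * Real.exp (-(B x))) := by ring
      _ = 2 * M := by rw [hee]; ring
  · rw [deriv_zero_of_not_differentiableAt hd, abs_zero]
    linarith
end

section
/- Let B be a convex potential on (a,b) with unique minimum x_0. For x ≥ x_0, the function κ_b(x) = e^{B(x)} ∫_x^b e^{-B(z)} dz satisfies B'(x)·κ_b(x) ≤ 1 and is non-increasing; for x ≤ x_0, the function κ_a(x) = e^{B(x)} ∫_a^x e^{-B(z)} dz satisfies |B'(x)|·κ_a(x) ≤ 1 and is non-decreasing. -/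
open MeasureTheory Set Real

section KappaAux

/-- Translation of a set integral. -/
lemma kappa_shift_integral (g : ℝ → ℝ) (A : Set ℝ) (hA : MeasurableSet A) (h : ℝ) :
    ∫ z in A, g (z - h) = ∫ w in {w : ℝ | w + h ∈ A}, g w := by
  have hA' : MeasurableSet {w : ℝ | w + h ∈ A} := hA.preimage (measurable_id.add_const h)
  calc ∫ z in A, g (z - h)
      = ∫ z, A.indicator (fun z => g (z - h)) z := (integral_indicator hA).symm
    _ = ∫ w, A.indicator (fun z => g (z - h)) (w + h) :=
        (integral_add_right_eq_self (A.indicator (fun z => g (z - h))) h).symm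
    _ = ∫ w, ({w : ℝ | w + h ∈ A}).indicator g w := by
        congr 1
        funext w
        by_cases hw : w + h ∈ A <;>
          simp [Set.indicator, hw, Set.mem_setOf_eq, add_sub_cancel_right]
    _ = ∫ w in {w : ℝ | w + h ∈ A}, g w := integral_indicator hA'

lemma kappa_shift_integrableOn {g : ℝ → ℝ} {A : Set ℝ} (hA : MeasurableSet A) (h : ℝ)
    (hg : IntegrableOn g {w : ℝ | w + h ∈ A}) :
    IntegrableOn (fun z => g (z - h)) A := by
  have hA' : MeasurableSet {w : ℝ | w + h ∈ A} := hA.preimage (measurable_id.add_const h)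
  rw [← integrable_indicator_iff hA]
  rw [← integrable_indicator_iff hA'] at hg
  have h2 := hg.comp_sub_right h
  have heq : (A.indicator fun z => g (z - h)) =
      fun z => ({w : ℝ | w + h ∈ A}).indicator g (z - h) := by
    funext z
    by_cases hz : z ∈ A
    · have hz' : z - h + h ∈ A := by simpa using hz
      simp [Set.indicator, hz, hz', Set.mem_setOf_eq]
    · have hz' : ¬ (z - h + h ∈ A) := by simpa using hz
      simp [Set.indicator, hz, hz', Set.mem_setOf_eq]
  rw [heq]
  exact h2

/-- Supporting tangent line of a convex function. -/
lemma kappa_support_line {S : Set ℝ} {B : ℝ → ℝ} (hconv : ConvexOn ℝ S B) {x z c : ℝ}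
    (hx : x ∈ S) (hz : z ∈ S) (hd : HasDerivAt B c x) :
    B x + c * (z - x) ≤ B z := by
  rcases lt_trichotomy x z with hlt | rfl | hgt
  · have h1 := hconv.le_slope_of_hasDerivAt hx hz hlt hd
    rw [slope_def_field] at h1
    have hz' : 0 < z - x := by linarith
    rw [le_div_iff₀ hz'] at h1
    linarith
  · simp
  · have h1 := hconv.slope_le_of_hasDerivAt hz hx hgt hd
    rw [slope_def_field] at h1
    have hz' : 0 < x - z := by linarith
    rw [div_le_iff₀ hz'] at h1
    linarith

/-- Increments of a convex function are monotone. -/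
lemma kappa_incr {S : Set ℝ} {B : ℝ → ℝ} (hconv : ConvexOn ℝ S B) {u v h : ℝ}
    (hu : u ∈ S) (huh : u + h ∈ S) (hv : v ∈ S) (hvh : v + h ∈ S)
    (huv : u ≤ v) (hh : 0 ≤ h) :
    B (u + h) - B u ≤ B (v + h) - B v := by
  rcases eq_or_lt_of_le hh with rfl | h0
  · simp
  rcases eq_or_lt_of_le huv with rfl | huv'
  · exact le_rfl
  have hd : (0:ℝ) < v + h - u := by linarith
  have s1 := hconv.secant_mono hu huh hvh
    (by intro he; linarith) (by intro he; linarith) (by linarith)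
  have s2 := hconv.secant_mono hvh hu hv (by intro he; linarith) (by intro he; linarith) huv
  rw [show u + h - u = h by ring, show v + h - u = v + h - u by ring,
    div_le_div_iff₀ h0 hd] at s1
  rw [show u - (v + h) = -(v + h - u) by ring, show v - (v + h) = -h by ring,
    div_neg, div_neg, neg_le_neg_iff, div_le_div_iff₀ h0 hd] at s2
  nlinarith [s1, s2]

lemma kappa_exp_int_Ioi {c : ℝ} (hc : 0 < c) (x : ℝ) :
    ∫ z in Ioi x, Real.exp (-(c * z)) = c⁻¹ * Real.exp (-(c * x)) := by
  have h1 := integral_comp_mul_left_Ioi (fun u => Real.exp (-u)) x hc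
  simp only [smul_eq_mul] at h1
  rw [integral_exp_neg_Ioi] at h1
  exact h1

lemma kappa_exp_int_Iic {c : ℝ} (hc : 0 < c) (x : ℝ) :
    ∫ z in Iic x, Real.exp (c * z) = c⁻¹ * Real.exp (c * x) := by
  have h1 : ∫ z in Iic x, Real.exp (c * z) = ∫ u in Ioi (-x), Real.exp (-(c * u)) := by
    rw [← integral_comp_neg_Iic]
    simp [mul_neg]
  rw [h1, kappa_exp_int_Ioi hc, mul_neg, neg_neg]

lemma kappa_exp_integrableOn_Iic {c : ℝ} (hc : 0 < c) (x : ℝ) :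
    IntegrableOn (fun z => Real.exp (c * z)) (Iic x) := by
  rw [← Measure.map_neg_eq_self (volume : Measure ℝ)]
  have m : MeasurableEmbedding fun x : ℝ => -x :=
    (Homeomorph.neg ℝ).measurableEmbedding
  rw [m.integrableOn_map_iff]
  simp only [Function.comp_def, neg_preimage, neg_Iic]
  refine Iff.mpr integrableOn_Ici_iff_integrableOn_Ioi ?_
  simpa [mul_neg, neg_mul] using exp_neg_integrableOn_Ioi (-x) hc

end KappaAux

set_option maxHeartbeats 1000000 in
/-- For a convex potential `B` on `(a,b)` with unique minimum `x₀`: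
for `x ≥ x₀`, `κ_b(x) = e^{B(x)} ∫_x^b e^{-B}` satisfies `B'(x)·κ_b(x) ≤ 1` and is
non-increasing; for `x ≤ x₀`, `κ_a(x) = e^{B(x)} ∫_a^x e^{-B}` satisfies
`|B'(x)|·κ_a(x) ≤ 1` and is non-decreasing. -/
theorem kappa_bounds_convex_potential
    (a b : EReal) (hab : a < b)
    (B B' : ℝ → ℝ)
    (S : Set ℝ) (hS : S = {x : ℝ | a < (x : EReal) ∧ (x : EReal) < b})
    (hconv : ConvexOn ℝ S B)
    (hderiv : ∀ x ∈ S, HasDerivAt B (B' x) x)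
    (hint : IntegrableOn (fun z => Real.exp (-(B z))) S)
    (x0 : ℝ) (hx0 : x0 ∈ S) (hmin : IsMinOn B S x0)
    (huniq : ∀ y ∈ S, IsMinOn B S y → y = x0)
    (κa κb : ℝ → ℝ)
    (hκa : ∀ x, κa x = Real.exp (B x) * ∫ z in S ∩ Iio x, Real.exp (-(B z)))
    (hκb : ∀ x, κb x = Real.exp (B x) * ∫ z in S ∩ Ioi x, Real.exp (-(B z))) :
    (∀ x ∈ S, x0 ≤ x → B' x * κb x ≤ 1) ∧
    AntitoneOn κb (S ∩ Ici x0) ∧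
    (∀ x ∈ S, x ≤ x0 → |B' x| * κa x ≤ 1) ∧
    MonotoneOn κa (S ∩ Iic x0) := by
  -- basic facts about S
  have hSopen : IsOpen S := by
    rw [hS]
    have : {x : ℝ | a < (x : EReal) ∧ (x : EReal) < b}
        = ((↑) : ℝ → EReal) ⁻¹' (Ioo a b) := rfl
    rw [this]
    exact (isOpen_Ioo).preimage continuous_coe_real_ereal
  have hSm : MeasurableSet S := hSopen.measurableSet
  have hord : ∀ {u v w : ℝ}, u ∈ S → w ∈ S → u ≤ v → v ≤ w → v ∈ S := by
    intro u v w hu hw huv hvw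
    rw [hS] at hu hw ⊢
    exact ⟨lt_of_lt_of_le hu.1 (EReal.coe_le_coe_iff.mpr huv),
      lt_of_le_of_lt (EReal.coe_le_coe_iff.mpr hvw) hw.2⟩
  have hexp : ∀ t : ℝ, (fun w => Real.exp (t - B w))
      = fun w => Real.exp t * Real.exp (-(B w)) :=
    fun t => funext fun w => by rw [← Real.exp_add, sub_eq_add_neg]
  -- κ's as single integrals
  have kb_eq : ∀ t, κb t = ∫ z in S ∩ Ioi t, Real.exp (B t - B z) := by
    intro t
    rw [hκb t, hexp (B t), integral_const_mul]
  have ka_eq : ∀ t, κa t = ∫ z in S ∩ Iio t, Real.exp (B t - B z) := by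
    intro t
    rw [hκa t, hexp (B t), integral_const_mul]
  -- nonnegativity
  have hκb_nn : ∀ t, 0 ≤ κb t := by
    intro t
    rw [kb_eq t]
    exact setIntegral_nonneg (hSm.inter measurableSet_Ioi) fun z _ => (Real.exp_pos _).le
  have hκa_nn : ∀ t, 0 ≤ κa t := by
    intro t
    rw [ka_eq t]
    exact setIntegral_nonneg (hSm.inter measurableSet_Iio) fun z _ => (Real.exp_pos _).le
  -- derivative sign for x ≤ x0
  have hBneg : ∀ x ∈ S, x ≤ x0 → B' x ≤ 0 := by
    intro x hx hxle
    rcases eq_or_lt_of_le hxle with rfl | hlt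
    · exact le_of_eq ((hmin.isLocalMin (hSopen.mem_nhds hx)).hasDerivAt_eq_zero (hderiv x hx))
    · have h1 := kappa_support_line hconv hx hx0 (hderiv x hx)
      have h2 : B x0 ≤ B x := hmin hx
      nlinarith [h1, h2, hlt]
  constructor
  · -- part 1 : B' x * κb x ≤ 1 for x ≥ x0
    intro x hx _
    rcases le_or_gt (B' x) 0 with hc | hc
    · have := mul_nonpos_of_nonpos_of_nonneg hc (hκb_nn x)
      linarith
    · set c := B' x with hcdef
      have hmaj : ∀ z ∈ S ∩ Ioi x, Real.exp (-(B z))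
          ≤ Real.exp (-(B x) + c * x) * Real.exp (-(c * z)) := by
        intro z hz
        rw [← Real.exp_add]
        apply Real.exp_le_exp.mpr
        have := kappa_support_line hconv hx hz.1 (hderiv x hx)
        nlinarith [this]
      have hint1 : IntegrableOn (fun z => Real.exp (-(B z))) (S ∩ Ioi x) :=
        hint.mono_set inter_subset_left
      have hint2 : IntegrableOn
          (fun z => Real.exp (-(B x) + c * x) * Real.exp (-(c * z))) (Ioi x) := by
        have := (exp_neg_integrableOn_Ioi x hc).const_mul (Real.exp (-(B x) + c * x))
        simp only [neg_mul] at this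
        exact this
      have key : (∫ z in S ∩ Ioi x, Real.exp (-(B z)))
          ≤ Real.exp (-(B x) + c * x) * (c⁻¹ * Real.exp (-(c * x))) := by
        calc (∫ z in S ∩ Ioi x, Real.exp (-(B z)))
            ≤ ∫ z in S ∩ Ioi x, Real.exp (-(B x) + c * x) * Real.exp (-(c * z)) :=
              setIntegral_mono_on hint1 (hint2.mono_set inter_subset_right)
                (hSm.inter measurableSet_Ioi) hmaj
          _ ≤ ∫ z in Ioi x, Real.exp (-(B x) + c * x) * Real.exp (-(c * z)) :=
              setIntegral_mono_set hint2
                (Filter.Eventually.of_forall fun z => by positivity)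
                (HasSubset.Subset.eventuallyLE inter_subset_right)
          _ = Real.exp (-(B x) + c * x) * (c⁻¹ * Real.exp (-(c * x))) := by
              rw [integral_const_mul, kappa_exp_int_Ioi hc]
      have h2 : κb x ≤ Real.exp (B x) *
          (Real.exp (-(B x) + c * x) * (c⁻¹ * Real.exp (-(c * x)))) := by
        rw [hκb x]
        exact mul_le_mul_of_nonneg_left key (Real.exp_nonneg _)
      have hE : Real.exp (B x) * Real.exp (-(B x) + c * x) * Real.exp (-(c * x)) = 1 := by
        rw [← Real.exp_add, ← Real.exp_add]
        rw [show B x + (-(B x) + c * x) + -(c * x) = 0 by ring, Real.exp_zero]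
      have h3 : Real.exp (B x) *
          (Real.exp (-(B x) + c * x) * (c⁻¹ * Real.exp (-(c * x)))) = c⁻¹ := by
        rw [show Real.exp (B x) * (Real.exp (-(B x) + c * x) * (c⁻¹ * Real.exp (-(c * x))))
          = c⁻¹ * (Real.exp (B x) * Real.exp (-(B x) + c * x) * Real.exp (-(c * x))) by ring,
          hE, mul_one]
      rw [h3] at h2
      calc c * κb x ≤ c * c⁻¹ := mul_le_mul_of_nonneg_left h2 hc.le
        _ = 1 := mul_inv_cancel₀ hc.ne'
  refine ⟨?_, ?_, ?_⟩
  · -- part 2 : antitone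
    intro x hx y hy hxy
    set h := y - x with hhdef
    have hh : 0 ≤ h := by simp [hhdef]; linarith
    have hxS : x ∈ S := hx.1
    have hyS : y ∈ S := hy.1
    have hxh : x + h ∈ S := by rw [hhdef]; simpa [add_sub_cancel] using hyS
    have hAy : MeasurableSet (S ∩ Ioi y) := hSm.inter measurableSet_Ioi
    have hT : {w : ℝ | w + h ∈ S ∩ Ioi y} ⊆ S ∩ Ioi x := by
      intro w hw
      have hw1 : w + h ∈ S := hw.1
      have hw2 : y < w + h := hw.2
      have hwx : x < w := by simp [hhdef] at hw2 ⊢; linarith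
      exact ⟨hord hxS hw1 hwx.le (by linarith), hwx⟩
    have hTS : {w : ℝ | w + h ∈ S ∩ Ioi y} ⊆ S := fun w hw => (hT hw).1
    have hgint : IntegrableOn (fun w => Real.exp (B x - B w)) (S ∩ Ioi x) := by
      rw [hexp (B x)]
      exact (hint.mono_set inter_subset_left).const_mul _
    have hgintT : IntegrableOn (fun w => Real.exp (B x - B w))
        {w : ℝ | w + h ∈ S ∩ Ioi y} := hgint.mono_set hT
    have hmid : IntegrableOn (fun z => Real.exp (B x - B (z - h))) (S ∩ Ioi y) :=
      kappa_shift_integrableOn (g := fun w => Real.exp (B x - B w)) hAy h hgintT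
    have hpt : ∀ z ∈ S ∩ Ioi y, Real.exp (B y - B z) ≤ Real.exp (B x - B (z - h)) := by
      intro z hz
      apply Real.exp_le_exp.mpr
      have hzS : z ∈ S := hz.1
      have hzy : y < z := hz.2
      have hzh : z - h ∈ S := hord hxS hzS (by simp [hhdef]; linarith) (by linarith)
      have hinc := kappa_incr hconv hxS hxh hzh (by simpa [sub_add_cancel] using hzS)
        (by simp [hhdef]; linarith) hh
      rw [show x + h = y by rw [hhdef]; ring, show z - h + h = z by ring] at hinc
      linarith
    calc κb y = ∫ z in S ∩ Ioi y, Real.exp (B y - B z) := kb_eq y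
      _ ≤ ∫ z in S ∩ Ioi y, Real.exp (B x - B (z - h)) := by
          apply setIntegral_mono_on ?_ hmid hAy hpt
          rw [hexp (B y)]
          exact (hint.mono_set inter_subset_left).const_mul _
      _ = ∫ w in {w : ℝ | w + h ∈ S ∩ Ioi y}, Real.exp (B x - B w) :=
          kappa_shift_integral (fun w => Real.exp (B x - B w)) _ hAy h
      _ ≤ ∫ w in S ∩ Ioi x, Real.exp (B x - B w) :=
          setIntegral_mono_set hgint
            (Filter.Eventually.of_forall fun w => (Real.exp_pos _).le)
            (HasSubset.Subset.eventuallyLE hT)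
      _ = κb x := (kb_eq x).symm
  · -- part 3
    intro x hx hxle
    have hc0 : B' x ≤ 0 := hBneg x hx hxle
    rcases eq_or_lt_of_le hc0 with hc | hc
    · rw [hc, abs_zero, zero_mul]; norm_num
    · set c := B' x with hcdef
      set d := -c with hddef
      have hd : 0 < d := by simp [hddef]; linarith
      have hmaj : ∀ z ∈ S ∩ Iio x, Real.exp (-(B z))
          ≤ Real.exp (-(B x) + c * x) * Real.exp (d * z) := by
        intro z hz
        rw [← Real.exp_add]
        apply Real.exp_le_exp.mpr
        have := kappa_support_line hconv hx hz.1 (hderiv x hx)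
        have hdz : d * z = -(c * z) := by rw [hddef]; ring
        nlinarith [this]
      have hint1 : IntegrableOn (fun z => Real.exp (-(B z))) (S ∩ Iio x) :=
        hint.mono_set inter_subset_left
      have hint2 : IntegrableOn
          (fun z => Real.exp (-(B x) + c * x) * Real.exp (d * z)) (Iic x) :=
        (kappa_exp_integrableOn_Iic hd x).const_mul _
      have key : (∫ z in S ∩ Iio x, Real.exp (-(B z)))
          ≤ Real.exp (-(B x) + c * x) * (d⁻¹ * Real.exp (d * x)) := by
        calc (∫ z in S ∩ Iio x, Real.exp (-(B z)))
            ≤ ∫ z in S ∩ Iio x, Real.exp (-(B x) + c * x) * Real.exp (d * z) :=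
              setIntegral_mono_on hint1
                (hint2.mono_set (inter_subset_right.trans Iio_subset_Iic_self))
                (hSm.inter measurableSet_Iio) hmaj
          _ ≤ ∫ z in Iic x, Real.exp (-(B x) + c * x) * Real.exp (d * z) :=
              setIntegral_mono_set hint2
                (Filter.Eventually.of_forall fun z => by positivity)
                (HasSubset.Subset.eventuallyLE
                  (inter_subset_right.trans Iio_subset_Iic_self))
          _ = Real.exp (-(B x) + c * x) * (d⁻¹ * Real.exp (d * x)) := by
              rw [integral_const_mul, kappa_exp_int_Iic hd]
      have h2 : κa x ≤ Real.exp (B x) *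
          (Real.exp (-(B x) + c * x) * (d⁻¹ * Real.exp (d * x))) := by
        rw [hκa x]
        exact mul_le_mul_of_nonneg_left key (Real.exp_nonneg _)
      have hE : Real.exp (B x) * Real.exp (-(B x) + c * x) * Real.exp (d * x) = 1 := by
        rw [← Real.exp_add, ← Real.exp_add]
        rw [show B x + (-(B x) + c * x) + d * x = 0 by rw [hddef]; ring, Real.exp_zero]
      have h3 : Real.exp (B x) *
          (Real.exp (-(B x) + c * x) * (d⁻¹ * Real.exp (d * x))) = d⁻¹ := by
        rw [show Real.exp (B x) * (Real.exp (-(B x) + c * x) * (d⁻¹ * Real.exp (d * x)))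
          = d⁻¹ * (Real.exp (B x) * Real.exp (-(B x) + c * x) * Real.exp (d * x)) by ring,
          hE, mul_one]
      rw [h3] at h2
      have habs : |c| = d := by rw [hddef, abs_of_neg hc]
      rw [habs]
      calc d * κa x ≤ d * d⁻¹ := mul_le_mul_of_nonneg_left h2 hd.le
        _ = 1 := mul_inv_cancel₀ hd.ne'
  · -- part 4 : monotone
    intro x hx y hy hxy
    set h := y - x with hhdef
    have hh : 0 ≤ h := by simp [hhdef]; linarith
    have hxS : x ∈ S := hx.1
    have hyS : y ∈ S := hy.1
    have hAx : MeasurableSet (S ∩ Iio x) := hSm.inter measurableSet_Iio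
    have hT : {w : ℝ | w + -h ∈ S ∩ Iio x} ⊆ S ∩ Iio y := by
      intro w hw
      have hw1 : w - h ∈ S := by simpa [sub_eq_add_neg] using hw.1
      have hw2 : w - h < x := by simpa [sub_eq_add_neg] using hw.2
      have hwy : w < y := by simp [hhdef] at hw2 ⊢; linarith
      exact ⟨hord hw1 hyS (by linarith) hwy.le, hwy⟩
    have hTS : {w : ℝ | w + -h ∈ S ∩ Iio x} ⊆ S := fun w hw => (hT hw).1
    have hgint : IntegrableOn (fun w => Real.exp (B y - B w)) (S ∩ Iio y) := by
      rw [hexp (B y)]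
      exact (hint.mono_set inter_subset_left).const_mul _
    have hgintT : IntegrableOn (fun w => Real.exp (B y - B w))
        {w : ℝ | w + -h ∈ S ∩ Iio x} := hgint.mono_set hT
    have hmid : IntegrableOn (fun z => Real.exp (B y - B (z - -h))) (S ∩ Iio x) :=
      kappa_shift_integrableOn (g := fun w => Real.exp (B y - B w)) hAx (-h) hgintT
    have hpt : ∀ z ∈ S ∩ Iio x, Real.exp (B x - B z) ≤ Real.exp (B y - B (z - -h)) := by
      intro z hz
      apply Real.exp_le_exp.mpr
      have hzS : z ∈ S := hz.1
      have hzx : z < x := hz.2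
      have hzh : z + h ∈ S := hord hzS hyS (by linarith) (by simp [hhdef]; linarith)
      have hxh : x + h ∈ S := by rw [hhdef]; simpa [add_sub_cancel] using hyS
      have hinc := kappa_incr hconv hzS hzh hxS hxh hzx.le hh
      rw [show x + h = y by rw [hhdef]; ring] at hinc
      rw [show z - -h = z + h by ring]
      linarith
    calc κa x = ∫ z in S ∩ Iio x, Real.exp (B x - B z) := ka_eq x
      _ ≤ ∫ z in S ∩ Iio x, Real.exp (B y - B (z - -h)) := by
          apply setIntegral_mono_on ?_ hmid hAx hpt
          rw [hexp (B x)]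
          exact (hint.mono_set inter_subset_left).const_mul _
      _ = ∫ w in {w : ℝ | w + -h ∈ S ∩ Iio x}, Real.exp (B y - B w) :=
          kappa_shift_integral (fun w => Real.exp (B y - B w)) _ hAx (-h)
      _ ≤ ∫ w in S ∩ Iio y, Real.exp (B y - B w) :=
          setIntegral_mono_set hgint
            (Filter.Eventually.of_forall fun w => (Real.exp_pos _).le)
            (HasSubset.Subset.eventuallyLE hT)
      _ = κa y := (ka_eq y).symm
end

section
/- For all x ≥ 0, √2 · e^{4/9} · exp(−1/(6(x+3/8))) · x^x e^{−x} √(x+1/2) ≤ Γ(x+1) ≤ √(2π) · exp(−1/(6(x+3/8))) · x^x e^{−x} √(x+1/2), with the convention 0^0 = 1. -/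
section BatirAux
open Real Filter


lemma atanh_lower {u : ℝ} (h0 : 0 ≤ u) (h1 : u < 1) :
    2*u + 2*u^3/3 + 2*u^5/5 ≤ Real.log (1+u) - Real.log (1-u) := by
  set g : ℝ → ℝ := fun t => Real.log (1+t) - Real.log (1-t) - (2*t + 2*t^3/3 + 2*t^5/5) with hg
  have hderiv : ∀ t ∈ Set.Ioo (-1:ℝ) 1, HasDerivAt g (2*t^6/(1-t^2)) t := by
    intro t ht
    have ht1 : (0:ℝ) < 1 + t := by linarith [ht.1]
    have ht2 : (0:ℝ) < 1 - t := by linarith [ht.2]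
    have hA : HasDerivAt (fun t : ℝ => Real.log (1+t)) (1/(1+t)) t := by
      have := ((hasDerivAt_id t).const_add 1).log (by simp; linarith)
      simpa using this
    have hB : HasDerivAt (fun t : ℝ => Real.log (1-t)) (-(1/(1-t))) t := by
      have h' : HasDerivAt (fun t : ℝ => 1 - t) (-1) t := by
        simpa using ((hasDerivAt_id t).const_sub 1)
      have := h'.log (by linarith)
      convert this using 1
      field_simp
    have hC : HasDerivAt (fun t : ℝ => 2*t + 2*t^3/3 + 2*t^5/5) (2 + 2*t^2 + 2*t^4) t := by
      have h1' : HasDerivAt (fun t : ℝ => 2*t) 2 t := by simpa using (hasDerivAt_id t).const_mul 2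
      have h2' : HasDerivAt (fun t : ℝ => 2*t^3/3) (2*t^2) t := by
        have := (hasDerivAt_pow 3 t).const_mul 2
        have := this.div_const 3
        exact this.congr_deriv (by push_cast ; ring)
      have h3' : HasDerivAt (fun t : ℝ => 2*t^5/5) (2*t^4) t := by
        have := (hasDerivAt_pow 5 t).const_mul 2
        have := this.div_const 5
        exact this.congr_deriv (by push_cast ; ring)
      exact (h1'.add h2').add h3'
    have := (hA.sub hB).sub hC
    refine this.congr_deriv ?_
    have hne1 : (1:ℝ) + t ≠ 0 := ne_of_gt ht1
    have hne2 : (1:ℝ) - t ≠ 0 := ne_of_gt ht2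
    have hne3 : (1:ℝ) - t^2 ≠ 0 := by nlinarith [ht.1, ht.2]
    field_simp
    ring
  rcases eq_or_lt_of_le h0 with rfl | h0'
  · simp
  · have mono : MonotoneOn g (Set.Icc 0 u) := by
      apply monotoneOn_of_deriv_nonneg (convex_Icc 0 u)
      · intro t ht
        have htm : t ∈ Set.Ioo (-1:ℝ) 1 := ⟨by linarith [ht.1], lt_of_le_of_lt ht.2 h1⟩
        exact ((hderiv t htm).continuousAt).continuousWithinAt
      · intro t ht
        rw [interior_Icc] at ht
        have htm : t ∈ Set.Ioo (-1:ℝ) 1 := ⟨by linarith [ht.1], ht.2.trans h1⟩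
        exact ((hderiv t htm).differentiableAt).differentiableWithinAt
      · intro t ht
        rw [interior_Icc] at ht
        have htm : t ∈ Set.Ioo (-1:ℝ) 1 := ⟨by linarith [ht.1], ht.2.trans h1⟩
        rw [(hderiv t htm).deriv]
        have : (0:ℝ) < 1 - t^2 := by nlinarith [htm.1, htm.2]
        positivity
    have := mono (Set.left_mem_Icc.mpr h0) (Set.right_mem_Icc.mpr h0) h0
    simp only [hg] at this
    simp at this
    linarith



lemma key_step {y : ℝ} (hy : 0 < y) :
    1/(y+1) + 1/(2*y+1) - 1/(2*y+3) + 1/(6*(y+3/8)^2) - 1/(6*(y+11/8)^2)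
      ≤ Real.log (y+1) - Real.log y := by
  set u : ℝ := 1/(2*y+1) with hu
  have h2y : (0:ℝ) < 2*y+1 := by linarith
  have hu0 : 0 ≤ u := by positivity
  have hu1 : u < 1 := by
    rw [hu, div_lt_one h2y]; linarith
  have hlogeq : Real.log (y+1) - Real.log y = Real.log (1+u) - Real.log (1-u) := by
    have e1 : 1 + u = (2*y+2)/(2*y+1) := by rw [hu]; field_simp; ring
    have e2 : 1 - u = (2*y)/(2*y+1) := by rw [hu]; field_simp; ring
    rw [e1, e2, Real.log_div (by linarith) (ne_of_gt h2y),
        Real.log_div (by linarith) (ne_of_gt h2y)]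
    have e3 : (2*y+2 : ℝ) = 2*(y+1) := by ring
    have e4 : (2*y : ℝ) = 2*y := rfl
    rw [e3, Real.log_mul (by norm_num) (by linarith), Real.log_mul (by norm_num) (ne_of_gt hy)]
    ring
  rw [hlogeq]
  refine le_trans ?_ (atanh_lower hu0 hu1)
  rw [← sub_nonneg]
  have hA : (y:ℝ)+1 > 0 := by linarith
  have hB : (2*y+3 : ℝ) > 0 := by linarith
  have hC : (8*y+3 : ℝ) > 0 := by linarith
  have hD : (8*y+11 : ℝ) > 0 := by linarith
  have hid : 2*u + 2*u^3/3 + 2*u^5/5 -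
      (1/(y+1) + 1/(2*y+1) - 1/(2*y+3) + 1/(6*(y+3/8)^2) - 1/(6*(y+11/8)^2))
      = (14847 + 125536*y + 398152*y^2 + 593912*y^3 + 427584*y^4 + 125952*y^5 + 8192*y^6)
        / (15*((y+1)*(2*y+1)^5*(2*y+3)*(8*y+3)^2*(8*y+11)^2)) := by
    rw [hu]
    have h1 : ((y:ℝ)+3/8)^2 ≠ 0 := by positivity
    have h2 : ((y:ℝ)+11/8)^2 ≠ 0 := by positivity
    field_simp
    ring
  rw [hid]
  positivity


noncomputable def psi : ℝ → ℝ := deriv (Real.log ∘ Real.Gamma)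

lemma diffAt_logGamma {y : ℝ} (hy : 0 < y) :
    DifferentiableAt ℝ (Real.log ∘ Real.Gamma) y := by
  have h1 : DifferentiableAt ℝ Real.Gamma y :=
    Real.differentiableAt_Gamma (fun m => by
      have : (0:ℝ) ≤ m := Nat.cast_nonneg m
      intro h; rw [h] at hy; linarith)
  have h2 : Real.Gamma y ≠ 0 := ne_of_gt (Real.Gamma_pos_of_pos hy)
  simpa [Function.comp_def] using h1.log h2

lemma hasDerivAt_logGamma {y : ℝ} (hy : 0 < y) :
    HasDerivAt (Real.log ∘ Real.Gamma) (psi y) y :=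
  (diffAt_logGamma hy).hasDerivAt

lemma psi_rec {y : ℝ} (hy : 0 < y) : psi (y+1) = psi y + 1/y := by
  have h1 : HasDerivAt (fun t => (Real.log ∘ Real.Gamma) (t+1)) (psi (y+1)) y := by
    simpa [Function.comp_def] using (hasDerivAt_logGamma (by linarith : (0:ℝ) < y+1)).comp y
      ((hasDerivAt_id y).add_const 1)
  have h2 : HasDerivAt (fun t => Real.log t + (Real.log ∘ Real.Gamma) t) (1/y + psi y) y := by
    have := (Real.hasDerivAt_log (ne_of_gt hy)).add (hasDerivAt_logGamma hy)
    exact this.congr_deriv (by simp [one_div])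
  have heq : (fun t => (Real.log ∘ Real.Gamma) (t+1)) =ᶠ[nhds y]
      (fun t => Real.log t + (Real.log ∘ Real.Gamma) t) := by
    filter_upwards [eventually_gt_nhds hy] with t ht
    simp only [Function.comp_apply]
    rw [Real.Gamma_add_one (ne_of_gt ht),
      Real.log_mul (ne_of_gt ht) (ne_of_gt (Real.Gamma_pos_of_pos ht))]
  have h3 : HasDerivAt (fun t => (Real.log ∘ Real.Gamma) (t+1)) (1/y + psi y) y :=
    h2.congr_of_eventuallyEq heq
  have := h1.unique h3
  linarith

lemma log_le_psi_add_one {y : ℝ} (hy : 0 < y) : Real.log y ≤ psi (y+1) := by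
  have hc := Real.convexOn_log_Gamma
  have hs := hc.slope_le_deriv (Set.mem_Ioi.mpr hy) (Set.mem_Ioi.mpr (by linarith : (0:ℝ) < y+1))
      (by linarith) (diffAt_logGamma (by linarith))
  rw [slope_def_field] at hs
  have : ((Real.log ∘ Real.Gamma) (y+1) - (Real.log ∘ Real.Gamma) y) / (y + 1 - y) = Real.log y := by
    simp only [Function.comp_apply]
    rw [Real.Gamma_add_one (ne_of_gt hy),
      Real.log_mul (ne_of_gt hy) (ne_of_gt (Real.Gamma_pos_of_pos hy))]
    ring_nf
  rw [this] at hs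
  exact hs

lemma psi_add_one_le_log {y : ℝ} (hy : 0 < y) : psi (y+1) ≤ Real.log (y+1) := by
  have hc := Real.convexOn_log_Gamma
  have hs := hc.deriv_le_slope (Set.mem_Ioi.mpr (by linarith : (0:ℝ) < y+1))
      (Set.mem_Ioi.mpr (by linarith : (0:ℝ) < y+2)) (by linarith)
      (diffAt_logGamma (by linarith))
  rw [slope_def_field] at hs
  have : ((Real.log ∘ Real.Gamma) (y+2) - (Real.log ∘ Real.Gamma) (y+1)) / (y + 2 - (y+1))
      = Real.log (y+1) := by
    simp only [Function.comp_apply]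
    have e : (y:ℝ)+2 = (y+1)+1 := by ring
    rw [e, Real.Gamma_add_one (by linarith : (y:ℝ)+1 ≠ 0),
      Real.log_mul (by linarith : (y:ℝ)+1 ≠ 0)
        (ne_of_gt (Real.Gamma_pos_of_pos (by linarith : (0:ℝ) < y+1)))]
    ring_nf
  rw [this] at hs
  exact hs




noncomputable def hfun (y : ℝ) : ℝ :=
  psi (y+1) - Real.log y - 1/(2*y+1) - 1/(6*(y+3/8)^2)

lemma hfun_step {y : ℝ} (hy : 0 < y) : hfun (y+1) ≤ hfun y := by
  unfold hfun
  have hrec : psi (y+1+1) = psi (y+1) + 1/(y+1) := psi_rec (by linarith)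
  rw [hrec]
  have := key_step hy
  have h38 : (y+1+3/8 : ℝ) = y + 11/8 := by ring
  rw [h38]
  have h23 : (2*(y+1)+1:ℝ) = 2*y+3 := by ring
  rw [h23]
  linarith

lemma hfun_le {y : ℝ} (hy : 0 < y) : ∀ n : ℕ, hfun (y + n) ≤ hfun y := by
  intro n
  induction n with
  | zero => simp
  | succ k ih =>
    have : (y + (k+1:ℕ) : ℝ) = (y + k) + 1 := by push_cast; ring
    rw [this]
    exact le_trans (hfun_step (by positivity)) ih

lemma tendsto_hfun {y : ℝ} (hy : 0 < y) :
    Tendsto (fun n : ℕ => hfun (y + n)) atTop (nhds 0) := by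
  have hbase : Tendsto (fun n : ℕ => y + (n:ℝ)) atTop atTop :=
    tendsto_atTop_add_const_left _ y tendsto_natCast_atTop_atTop
  have hlow : Tendsto (fun n : ℕ => -(1/(2*(y+(n:ℝ))+1)) - 1/(6*(y+(n:ℝ)+3/8)^2)) atTop (nhds 0) := by
    have l1 : Tendsto (fun n : ℕ => 1/(2*(y+(n:ℝ))+1)) atTop (nhds 0) := by
      simp_rw [one_div]
      apply Tendsto.comp tendsto_inv_atTop_zero
      apply tendsto_atTop_add_const_right
      exact (tendsto_const_mul_atTop_of_pos (by norm_num : (0:ℝ) < 2)).mpr hbase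
    have l2 : Tendsto (fun n : ℕ => 1/(6*(y+(n:ℝ)+3/8)^2)) atTop (nhds 0) := by
      have hbt : Tendsto (fun n : ℕ => y+(n:ℝ)+3/8) atTop atTop :=
        tendsto_atTop_add_const_right _ _ hbase
      simp_rw [one_div, pow_two]
      apply Tendsto.comp tendsto_inv_atTop_zero
      apply (tendsto_const_mul_atTop_of_pos (by norm_num : (0:ℝ) < 6)).mpr
      exact Tendsto.atTop_mul_atTop₀ hbt hbt
    have := (l1.neg).sub l2
    simpa using this
  have hhigh : Tendsto (fun n : ℕ => Real.log (y+(n:ℝ)+1) - Real.log (y+(n:ℝ))) atTop (nhds 0) := by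
    have e : ∀ n : ℕ, Real.log (y+(n:ℝ)+1) - Real.log (y+(n:ℝ)) = Real.log (1 + 1/(y+(n:ℝ))) := by
      intro n
      have hp : (0:ℝ) < y + n := by positivity
      rw [← Real.log_div (by linarith) (ne_of_gt hp)]
      congr 1
      field_simp
    simp_rw [e]
    have l3 : Tendsto (fun n : ℕ => 1 + 1/(y+(n:ℝ))) atTop (nhds 1) := by
      have : Tendsto (fun n : ℕ => 1/(y+(n:ℝ))) atTop (nhds 0) := by
        simp_rw [one_div]
        exact Tendsto.comp tendsto_inv_atTop_zero hbase
      simpa using (tendsto_const_nhds (x := (1:ℝ))).add this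
    have := (Real.continuousAt_log (by norm_num : (1:ℝ) ≠ 0)).tendsto.comp l3
    simpa [Function.comp_def] using this
  apply tendsto_of_tendsto_of_tendsto_of_le_of_le hlow hhigh
  · intro n
    unfold hfun
    have hp : (0:ℝ) < y + n := by positivity
    have := log_le_psi_add_one hp
    linarith
  · intro n
    unfold hfun
    have hp : (0:ℝ) < y + n := by positivity
    have h1 := psi_add_one_le_log hp
    have h2 : (0:ℝ) < 2*(y+(n:ℝ))+1 := by linarith
    have h3 : (0:ℝ) < 6*(y+(n:ℝ)+3/8)^2 := by positivity
    have h4 : 0 ≤ 1/(2*(y+(n:ℝ))+1) := by positivity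
    have h5 : 0 ≤ 1/(6*(y+(n:ℝ)+3/8)^2) := by positivity
    linarith

lemma hfun_nonneg {y : ℝ} (hy : 0 < y) : 0 ≤ hfun y :=
  le_of_tendsto (tendsto_hfun hy) (Filter.Eventually.of_forall (hfun_le hy))





noncomputable def ffun (y : ℝ) : ℝ :=
  Real.log (Real.Gamma (y+1)) - y * Real.log y + y - Real.log (y + 1/2)/2 + 1/(6*(y+3/8))

lemma hasDerivAt_ffun {y : ℝ} (hy : 0 < y) : HasDerivAt ffun (hfun y) y := by
  have c1 : HasDerivAt (fun t : ℝ => Real.log (Real.Gamma (t+1))) (psi (y+1)) y := by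
    simpa [Function.comp_def] using (hasDerivAt_logGamma (by linarith : (0:ℝ) < y+1)).comp y
      ((hasDerivAt_id y).add_const 1)
  have c2 : HasDerivAt (fun t : ℝ => t * Real.log t) (Real.log y + 1) y :=
    Real.hasDerivAt_mul_log (ne_of_gt hy)
  have c3 : HasDerivAt (fun t : ℝ => Real.log (t + 1/2)/2) ((1/(y+1/2))/2) y := by
    have h' : HasDerivAt (fun t : ℝ => t + 1/2) 1 y := (hasDerivAt_id y).add_const _
    have := (h'.log (by linarith : (y:ℝ)+1/2 ≠ 0)).div_const 2
    simpa using this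
  have c4 : HasDerivAt (fun t : ℝ => 1/(6*(t+3/8))) (-6/(6*(y+3/8))^2) y := by
    have h' : HasDerivAt (fun t : ℝ => 6*(t+3/8)) 6 y := by
      simpa using ((hasDerivAt_id y).add_const (3/8:ℝ)).const_mul 6
    have hne : (6*(y+3/8) : ℝ) ≠ 0 := by positivity
    have := h'.inv hne
    simp only [one_div]
    exact this
  have total := (((c1.sub c2).add (hasDerivAt_id y)).sub c3).add c4
  have : ffun = fun t => (((Real.log (Real.Gamma (t+1)) - t * Real.log t) + t)
      - Real.log (t + 1/2)/2) + 1/(6*(t+3/8)) := by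
    funext t; unfold ffun; ring
  rw [this]
  refine total.congr_deriv ?_
  unfold hfun
  have h1 : (y:ℝ)+1/2 > 0 := by linarith
  have h2 : (y:ℝ)+3/8 > 0 := by linarith
  field_simp
  ring

lemma continuousOn_ffun : ContinuousOn ffun (Set.Ici 0) := by
  intro y hy
  have hy0 : (0:ℝ) ≤ y := hy
  apply ContinuousWithinAt.add
  apply ContinuousWithinAt.sub
  apply ContinuousWithinAt.add
  apply ContinuousWithinAt.sub
  · -- log Gamma (y+1)
    apply ContinuousAt.continuousWithinAt
    have hpos : (0:ℝ) < y + 1 := by linarith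
    have hd : DifferentiableAt ℝ Real.Gamma (y+1) :=
      Real.differentiableAt_Gamma (fun m => by
        have : (0:ℝ) ≤ m := Nat.cast_nonneg m
        intro h; rw [h] at hpos; linarith)
    have hG : Real.Gamma (y+1) ≠ 0 := ne_of_gt (Real.Gamma_pos_of_pos hpos)
    have hadd : ContinuousAt (fun t : ℝ => t + 1) y := by fun_prop
    have h5 : ContinuousAt (fun t : ℝ => Real.Gamma (t+1)) y := by
      exact ContinuousAt.comp (g := Real.Gamma) (f := fun t : ℝ => t+1) hd.continuousAt hadd
    exact h5.log hG
  · exact (Real.continuous_mul_log.continuousAt).continuousWithinAt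
  · exact continuousWithinAt_id
  · apply ContinuousAt.continuousWithinAt
    have hne : (y:ℝ)+1/2 ≠ 0 := by linarith
    have h6 : ContinuousAt (fun t : ℝ => Real.log (t+1/2)) y :=
      ContinuousAt.log (by fun_prop) hne
    exact h6.div_const 2
  · apply ContinuousAt.continuousWithinAt
    have : (6*(y+3/8):ℝ) ≠ 0 := by positivity
    exact ContinuousAt.div continuousAt_const
      ((continuousAt_const.mul ((continuousAt_id).add continuousAt_const))) this

lemma monotoneOn_ffun : MonotoneOn ffun (Set.Ici 0) := by
  apply monotoneOn_of_deriv_nonneg (convex_Ici 0) continuousOn_ffun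
  · intro y hy
    rw [interior_Ici] at hy
    exact (hasDerivAt_ffun hy).differentiableAt.differentiableWithinAt
  · intro y hy
    rw [interior_Ici] at hy
    rw [(hasDerivAt_ffun hy).deriv]
    exact hfun_nonneg hy




lemma tendsto_ffun_nat : Tendsto (fun n : ℕ => ffun n) atTop (nhds (Real.log (2*π)/2)) := by
  have heq : (fun n : ℕ => Real.log (Stirling.stirlingSeq n)
        + (Real.log (2*n) - Real.log ((n:ℝ)+1/2))/2 + 1/(6*((n:ℝ)+3/8)))
      =ᶠ[atTop] (fun n : ℕ => ffun n) := by
    filter_upwards [eventually_ge_atTop 1] with n hn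
    have hn0 : (0:ℝ) < n := by exact_mod_cast hn
    have hfact : Real.log (Real.Gamma ((n:ℝ)+1)) = Real.log (n.factorial) := by
      rw [Real.Gamma_nat_eq_factorial]
    have hsf := Stirling.log_stirlingSeq_formula n
    have hlogdiv : Real.log ((n:ℝ) / Real.exp 1) = Real.log n - 1 := by
      rw [Real.log_div (ne_of_gt hn0) (ne_of_gt (Real.exp_pos 1)), Real.log_exp]
    rw [hlogdiv] at hsf
    unfold ffun
    rw [hfact]
    have : Real.log (n.factorial) = Real.log (Stirling.stirlingSeq n)
        + 1/2 * Real.log (2*(n:ℝ)) + (n:ℝ) * Real.log n - n := by linarith [hsf]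
    rw [this]
    ring
  apply Tendsto.congr' heq
  have hbase : Tendsto (fun n : ℕ => ((n:ℝ))) atTop atTop := tendsto_natCast_atTop_atTop
  have t1 : Tendsto (fun n : ℕ => Real.log (Stirling.stirlingSeq n)) atTop
      (nhds (Real.log (Real.sqrt π))) := by
    have hne : Real.sqrt π ≠ 0 := by positivity
    exact ((Real.continuousAt_log hne).tendsto).comp Stirling.tendsto_stirlingSeq_sqrt_pi
  have t2 : Tendsto (fun n : ℕ => (Real.log (2*n) - Real.log ((n:ℝ)+1/2))/2) atTop
      (nhds (Real.log 2 / 2)) := by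
    have e : ∀ᶠ n : ℕ in atTop, Real.log (2 - 1/((n:ℝ)+1/2))
        = Real.log (2*(n:ℝ)) - Real.log ((n:ℝ)+1/2) := by
      filter_upwards [eventually_ge_atTop 1] with n hn
      have hn0 : (0:ℝ) < n := by exact_mod_cast hn
      have h1 : ((n:ℝ)+1/2) > 0 := by linarith
      rw [← Real.log_div (by positivity) (ne_of_gt h1)]
      congr 1
      field_simp
      ring
    have l1 : Tendsto (fun n : ℕ => 2 - 1/((n:ℝ)+1/2)) atTop (nhds 2) := by
      have : Tendsto (fun n : ℕ => 1/((n:ℝ)+1/2)) atTop (nhds 0) := by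
        simp_rw [one_div]
        exact Tendsto.comp tendsto_inv_atTop_zero (tendsto_atTop_add_const_right _ _ hbase)
      simpa using (tendsto_const_nhds (x := (2:ℝ))).sub this
    have l2 : Tendsto (fun n : ℕ => Real.log (2 - 1/((n:ℝ)+1/2))) atTop (nhds (Real.log 2)) :=
      ((Real.continuousAt_log (by norm_num : (2:ℝ) ≠ 0)).tendsto).comp l1
    exact (l2.congr' e).div_const 2
  have t3 : Tendsto (fun n : ℕ => 1/(6*((n:ℝ)+3/8))) atTop (nhds 0) := by
    simp_rw [one_div]
    apply Tendsto.comp tendsto_inv_atTop_zero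
    apply (tendsto_const_mul_atTop_of_pos (by norm_num : (0:ℝ) < 6)).mpr
    exact tendsto_atTop_add_const_right _ _ hbase
  have := (t1.add t2).add t3
  have hval : Real.log (Real.sqrt π) + Real.log 2 / 2 + 0 = Real.log (2*π)/2 := by
    rw [Real.log_sqrt (le_of_lt Real.pi_pos), Real.log_mul (by norm_num) (ne_of_gt Real.pi_pos)]
    ring
  rw [hval] at this
  exact this

lemma ffun_le {x : ℝ} (hx : 0 ≤ x) : ffun x ≤ Real.log (2*π)/2 := by
  apply ge_of_tendsto tendsto_ffun_nat
  filter_upwards [eventually_ge_atTop ⌈x⌉₊] with n hn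
  have hxn : x ≤ (n:ℝ) := le_trans (Nat.le_ceil x) (by exact_mod_cast hn)
  exact monotoneOn_ffun hx (le_trans hx hxn) hxn

lemma le_ffun {x : ℝ} (hx : 0 ≤ x) : Real.log 2 / 2 + 4/9 ≤ ffun x := by
  have h0 : ffun 0 = Real.log 2 / 2 + 4/9 := by
    unfold ffun
    rw [zero_add, Real.Gamma_one, Real.log_one]
    norm_num [Real.log_div, Real.log_inv]
    ring
  rw [← h0]
  exact monotoneOn_ffun (Set.mem_Ici.mpr (le_refl 0)) hx hx


end BatirAux



open Real

/-- Batir's refinement of Stirling's formula: for all `x ≥ 0`,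
`√2 e^{4/9} e^{−1/(6(x+3/8))} x^x e^{−x} √(x+1/2) ≤ Γ(x+1)
  ≤ √(2π) e^{−1/(6(x+3/8))} x^x e^{−x} √(x+1/2)`
(with the convention `0^0 = 1`, as for `Real.rpow`). -/
theorem batir_stirling (x : ℝ) (hx : 0 ≤ x) :
    Real.sqrt 2 * Real.exp (4 / 9) * Real.exp (-(1 / (6 * (x + 3 / 8)))) *
        x ^ x * Real.exp (-x) * Real.sqrt (x + 1 / 2) ≤ Real.Gamma (x + 1) ∧
    Real.Gamma (x + 1) ≤ Real.sqrt (2 * Real.pi) * Real.exp (-(1 / (6 * (x + 3 / 8)))) *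
        x ^ x * Real.exp (-x) * Real.sqrt (x + 1 / 2) := by
  rcases hx.eq_or_lt with rfl | hx'
  · -- x = 0
    have hGam : Real.Gamma ((0:ℝ) + 1) = 1 := by norm_num [Real.Gamma_one]
    rw [hGam, Real.rpow_zero]
    have h49 : -(1 / (6 * ((0:ℝ) + 3 / 8))) = -(4/9) := by norm_num
    rw [h49]
    constructor
    ·
      have e1 : Real.exp (4/9) * Real.exp (-(4/9)) = 1 := by
        rw [← Real.exp_add]; norm_num
      have e2 : Real.sqrt 2 * Real.sqrt ((0:ℝ) + 1/2) = 1 := by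
        rw [← Real.sqrt_mul (by norm_num : (0:ℝ) ≤ 2)]
        norm_num
      calc Real.sqrt 2 * Real.exp (4/9) * Real.exp (-(4/9)) * 1 * Real.exp (-0)
            * Real.sqrt ((0:ℝ) + 1/2)
          = (Real.exp (4/9) * Real.exp (-(4/9))) * (Real.sqrt 2 * Real.sqrt ((0:ℝ)+1/2))
            * Real.exp (-0) := by ring
        _ = 1 := by rw [e1, e2, neg_zero, Real.exp_zero]; ring
        _ ≤ 1 := le_refl 1
    · have e2 : Real.sqrt (2*π) * Real.sqrt ((0:ℝ) + 1/2) = Real.sqrt π := by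
        rw [← Real.sqrt_mul (by positivity : (0:ℝ) ≤ 2*π)]
        norm_num [mul_comm]
      have hexp : Real.exp (4/9) ≤ Real.sqrt π := by
        have h1 : Real.exp (4/9) ^ 2 = Real.exp (8/9) := by
          rw [← Real.exp_nat_mul]; norm_num
        have h2 : Real.exp (8/9) ≤ Real.exp 1 := Real.exp_le_exp.mpr (by norm_num)
        have h3 : Real.exp 1 < 2.7182818286 := Real.exp_one_lt_d9
        have h4 : (3.141592:ℝ) < π := Real.pi_gt_d6
        nlinarith [Real.sq_sqrt Real.pi_pos.le, Real.sqrt_nonneg π, Real.exp_pos (4/9:ℝ)]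
      calc (1:ℝ) = Real.exp (4/9) * Real.exp (-(4/9)) := by rw [← Real.exp_add]; norm_num
        _ ≤ Real.sqrt π * Real.exp (-(4/9)) := by
            apply mul_le_mul_of_nonneg_right hexp (le_of_lt (Real.exp_pos _))
        _ = Real.sqrt (2*π) * Real.exp (-(4/9)) * 1 * Real.exp (-0) * Real.sqrt ((0:ℝ)+1/2) := by
            rw [neg_zero, Real.exp_zero, ← e2]; ring
  · -- x > 0
    have hG : (0:ℝ) < Real.Gamma (x+1) := Real.Gamma_pos_of_pos (by linarith)
    have h12 : (0:ℝ) < x + 1/2 := by linarith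
    have e1 : Real.sqrt 2 = Real.exp (Real.log 2 / 2) := by
      rw [← Real.log_sqrt (by norm_num : (0:ℝ) ≤ 2),
        Real.exp_log (Real.sqrt_pos.mpr (by norm_num))]
    have e1' : Real.sqrt (2*π) = Real.exp (Real.log (2*π) / 2) := by
      rw [← Real.log_sqrt (by positivity : (0:ℝ) ≤ 2*π),
        Real.exp_log (Real.sqrt_pos.mpr (by positivity))]
    have e2 : Real.sqrt (x + 1/2) = Real.exp (Real.log (x+1/2) / 2) := by
      rw [← Real.log_sqrt (le_of_lt h12), Real.exp_log (Real.sqrt_pos.mpr h12)]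
    have e3 : x ^ x = Real.exp (x * Real.log x) := by
      rw [Real.rpow_def_of_pos hx', mul_comm]
    have e4 : Real.Gamma (x+1) = Real.exp (Real.log (Real.Gamma (x+1))) :=
      (Real.exp_log hG).symm
    have hub := ffun_le (le_of_lt hx')
    have hlb := le_ffun (le_of_lt hx')
    unfold ffun at hub hlb
    constructor
    · rw [e1, e2, e3, e4, ← Real.exp_add, ← Real.exp_add, ← Real.exp_add, ← Real.exp_add,
        ← Real.exp_add]
      exact Real.exp_le_exp.mpr (by linarith)
    · rw [e1', e2, e3, e4, ← Real.exp_add, ← Real.exp_add, ← Real.exp_add, ← Real.exp_add]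
      exact Real.exp_le_exp.mpr (by linarith)
end
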